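/- arXiv:1706.05614 — 14 statements merged into one kernel-verified Lean document; each statement's English description precedes it below -/
import Mathlib

section
/- Let H and K be subgroups of a finite group G with H ⊆ K. Then Pr(H, Aut(G)) ≤ [K : H] · Pr(K, Aut(G)), and equality holds if and only if H = K. -/
open scoped Classical

variable {G : Type*}

/-- The relative autocommutativity degree `Pr(H, Aut(G))`: the probability that a randomly
chosen automorphism of `G` fixes a randomly chosen element of the subgroup `H`. -/
noncomputable def autPr [Group G] (H : Subgroup G) : ℚ :=
  (Nat.card {p : H × MulAut G // p.2 (p.1 : G) = (p.1 : G)} : ℚ) /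
    ((Nat.card H : ℚ) * (Nat.card (MulAut G) : ℚ))

/-- `L(H, Aut(G))`, the subgroup of elements of `H` fixed by every automorphism of `G`. -/
def autFix [Group G] (H : Subgroup G) : Subgroup G where
  carrier := {x | x ∈ H ∧ ∀ α : MulAut G, α x = x}
  one_mem' := ⟨H.one_mem, fun α => map_one α⟩
  mul_mem' := fun ha hb => ⟨H.mul_mem ha.1 hb.1, fun α => by
    rw [map_mul, ha.2 α, hb.2 α]⟩
  inv_mem' := fun ha => ⟨H.inv_mem ha.1, fun α => by rw [map_inv, ha.2 α]⟩

instance autFix_normal [Group G] (H : Subgroup G) : ((autFix H).subgroupOf H).Normal := by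
  constructor
  intro n hn g
  rw [Subgroup.mem_subgroupOf] at hn ⊢
  obtain ⟨-, hfix⟩ := hn
  have hcen : ∀ c : G, c * (n : G) = (n : G) * c := by
    intro c
    have h := hfix (MulAut.conj c)
    simp only [MulAut.conj_apply] at h
    exact mul_inv_eq_iff_eq_mul.mp h
  have hconj : ∀ c : G, c * (n : G) * c⁻¹ = (n : G) := by
    intro c
    rw [hcen c, mul_inv_cancel_right]
  refine ⟨(g * n * g⁻¹).2, fun α => ?_⟩
  push_cast
  rw [map_mul, map_mul, map_inv, hfix α, hconj (α g), hconj (g : G)]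

/-- `X_H`: the set of elements of `H` whose centralizer in `Aut(G)` is trivial, i.e. the only
automorphism fixing them is the identity. -/
def autX [Group G] (H : Subgroup G) : Set H :=
  {x | ∀ α : MulAut G, α (x : G) = x → α = 1}

/-- `S(H, Aut(G))`: the set of autocommutators `[x, α] = x⁻¹ α(x)` with `x ∈ H`, `α ∈ Aut(G)`. -/
def autS [Group G] (H : Subgroup G) : Set G :=
  {g | ∃ x ∈ H, ∃ α : MulAut G, g = x⁻¹ * α x}

/-- Every autocommutator `x⁻¹ α(x)` with `x ∈ H` lies in `[H, Aut(G)] = ⟨S(H, Aut(G))⟩`. -/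
lemma autcomm_mem_closure [Group G] (H : Subgroup G) (x : H) (α : MulAut G) :
    (x : G)⁻¹ * α x ∈ Subgroup.closure (autS H) :=
  Subgroup.subset_closure ⟨x, x.2, α, rfl⟩

theorem stmt3 [Group G] [Fintype G] [DecidableEq G] (H K : Subgroup G) (hHK : H ≤ K) :
    autPr H ≤ (H.relIndex K : ℚ) * autPr K
    ∧ (autPr H = (H.relIndex K : ℚ) * autPr K ↔ H = K) := by
  have finAut : Finite (MulAut G) :=
    Finite.of_injective (fun α : MulAut G => (α : G ≃ G))
      (fun a b h => by ext x; exact congrFun (congrArg (fun e : G ≃ G => (e : G → G)) h) x)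
  set n : ℕ := Nat.card (MulAut G) with hn
  set a : ℕ := Nat.card {p : H × MulAut G // p.2 (p.1 : G) = (p.1 : G)} with ha
  set b : ℕ := Nat.card {p : K × MulAut G // p.2 (p.1 : G) = (p.1 : G)} with hb
  have hnpos : 0 < n := Nat.card_pos
  have hHpos : 0 < Nat.card H := Nat.card_pos
  let f : {p : H × MulAut G // p.2 (p.1 : G) = (p.1 : G)} →
      {p : K × MulAut G // p.2 (p.1 : G) = (p.1 : G)} :=
    fun p => ⟨(⟨(p.1.1 : G), hHK p.1.1.2⟩, p.1.2), p.2⟩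
  have hfinj : Function.Injective f := by
    rintro ⟨⟨⟨x, hx⟩, α⟩, hp⟩ ⟨⟨⟨y, hy⟩, β⟩, hq⟩ h
    simp only [f, Subtype.mk.injEq, Prod.mk.injEq] at h ⊢
    exact ⟨h.1, h.2⟩
  have hab : a ≤ b := Nat.card_le_card_of_injective f hfinj
  have hrel : H.relIndex K * Nat.card H = Nat.card K := by
    have := Subgroup.index_mul_card (H.subgroupOf K)
    rwa [Nat.card_congr (Subgroup.subgroupOfEquivOfLe hHK).toEquiv] at this
  have hrhs : (H.relIndex K : ℚ) * autPr K = (b : ℚ) / ((Nat.card H : ℚ) * n) := by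
    rw [autPr, show ((Nat.card K : ℚ)) = (H.relIndex K : ℚ) * (Nat.card H : ℚ) by
      rw [← hrel]; push_cast; ring]
    have hrpos : 0 < H.relIndex K := by
      rcases Nat.eq_zero_or_pos (H.relIndex K) with h0 | h
      · rw [h0, zero_mul] at hrel
        exact absurd hrel.symm Nat.card_pos.ne'
      · exact h
    rw [← hn, ← hb]
    field_simp
  have hlhs : autPr H = (a : ℚ) / ((Nat.card H : ℚ) * n) := rfl
  have hdenpos : (0 : ℚ) < (Nat.card H : ℚ) * n := by positivity
  have hstrict : H ≠ K → a < b := by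
    intro hne
    have hlt : H < K := lt_of_le_of_ne hHK hne
    obtain ⟨x, hxK, hxH⟩ := SetLike.exists_of_lt hlt
    have hnotsurj : ¬ Function.Surjective f := by
      intro hs
      obtain ⟨⟨⟨⟨y, hy⟩, α⟩, hp⟩, hfp⟩ := hs ⟨(⟨x, hxK⟩, 1), by simp⟩
      simp only [f, Subtype.mk.injEq, Prod.mk.injEq] at hfp
      exact hxH (by
        have h2 := congrArg (fun q : {p : K × MulAut G // p.2 (p.1 : G) = (p.1 : G)} => ((q.1.1 : K) : G)) hfp
        dsimp only at h2
        exact h2 ▸ hy)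
    haveI : Fintype {p : H × MulAut G // p.2 (p.1 : G) = (p.1 : G)} := Fintype.ofFinite _
    haveI : Fintype {p : K × MulAut G // p.2 (p.1 : G) = (p.1 : G)} := Fintype.ofFinite _
    rw [ha, hb, Nat.card_eq_fintype_card, Nat.card_eq_fintype_card]
    exact Fintype.card_lt_of_injective_not_surjective f hfinj hnotsurj
  constructor
  · rw [hlhs, hrhs]
    exact div_le_div_of_nonneg_right (by exact_mod_cast hab) hdenpos.le
  · constructor
    · intro heq
      by_contra hne
      have hlt := hstrict hne
      rw [hlhs, hrhs, div_eq_div_iff hdenpos.ne' hdenpos.ne'] at heq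
      have : (a : ℚ) = b := by
        have := mul_right_cancel₀ hdenpos.ne' heq
        exact this
      exact absurd (Nat.cast_injective this) hlt.ne
    · rintro rfl
      rw [Subgroup.relIndex_self]
      norm_num
end

section
/- Let H be a subgroup of a finite group G. Then Pr(H, Aut(G)) ≤ [G : H] · Pr(G, Aut(G)), with equality if and only if H = G. -/
open scoped Classical

variable {G : Type*}

theorem stmt4 [Group G] [Fintype G] [DecidableEq G] (H : Subgroup G) :
    autPr H ≤ (H.index : ℚ) * autPr (⊤ : Subgroup G)
    ∧ (autPr H = (H.index : ℚ) * autPr (⊤ : Subgroup G) ↔ H = ⊤) := by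
  classical
  set f : {p : H × MulAut G // p.2 (p.1 : G) = (p.1 : G)} →
      {p : (⊤ : Subgroup G) × MulAut G // p.2 (p.1 : G) = (p.1 : G)} :=
    fun p => ⟨(⟨(p.1.1 : G), Subgroup.mem_top _⟩, p.1.2), p.2⟩ with hf
  have hinj : Function.Injective f := by
    rintro ⟨⟨⟨x, hx⟩, α⟩, hp⟩ ⟨⟨⟨y, hy⟩, β⟩, hq⟩ h
    simp only [hf, Subtype.mk.injEq, Prod.mk.injEq] at h ⊢
    exact h
  have hle : Nat.card {p : H × MulAut G // p.2 (p.1 : G) = (p.1 : G)} ≤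
      Nat.card {p : (⊤ : Subgroup G) × MulAut G // p.2 (p.1 : G) = (p.1 : G)} :=
    Nat.card_le_card_of_injective f hinj
  have hHpos : 0 < (Nat.card H : ℚ) := by exact_mod_cast Nat.card_pos
  have hApos : 0 < (Nat.card (MulAut G) : ℚ) := by exact_mod_cast Nat.card_pos
  have hGpos : 0 < (Nat.card G : ℚ) := by exact_mod_cast Nat.card_pos
  have htop : (Nat.card (⊤ : Subgroup G) : ℚ) = (Nat.card G : ℚ) := by
    exact_mod_cast (Nat.card_congr Subgroup.topEquiv.toEquiv :
      Nat.card (⊤ : Subgroup G) = Nat.card G)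
  have hindex : (H.index : ℚ) * (Nat.card H : ℚ) = (Nat.card G : ℚ) := by
    exact_mod_cast congrArg Nat.cast (Subgroup.index_mul_card H)
  have hdenpos : (0:ℚ) < (Nat.card H : ℚ) * (Nat.card (MulAut G) : ℚ) := by positivity
  have key : (H.index : ℚ) * autPr (⊤ : Subgroup G) =
      (Nat.card {p : (⊤ : Subgroup G) × MulAut G // p.2 (p.1 : G) = (p.1 : G)} : ℚ) /
        ((Nat.card H : ℚ) * (Nat.card (MulAut G) : ℚ)) := by
    rw [autPr, htop]
    rw [mul_div_assoc', div_eq_div_iff (by positivity : (0:ℚ) < _).ne' hdenpos.ne']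
    rw [← hindex]
    ring
  refine ⟨?_, ?_, ?_⟩
  · rw [autPr, key]
    gcongr
  · intro h
    rw [autPr, key] at h
    have hcard : Nat.card {p : H × MulAut G // p.2 (p.1 : G) = (p.1 : G)} =
        Nat.card {p : (⊤ : Subgroup G) × MulAut G // p.2 (p.1 : G) = (p.1 : G)} := by
      have h2 := congrArg (· * ((Nat.card H : ℚ) * (Nat.card (MulAut G) : ℚ))) h
      simp only [div_mul_cancel₀ _ hdenpos.ne'] at h2
      exact_mod_cast h2
    have hbij : Function.Bijective f :=
      (Nat.bijective_iff_injective_and_card f).mpr ⟨hinj, hcard⟩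
    rw [Subgroup.eq_top_iff']
    intro g
    obtain ⟨p, hp⟩ := hbij.2 ⟨(⟨g, Subgroup.mem_top _⟩, 1), rfl⟩
    have hg : ((p.1.1 : G)) = g :=
      congrArg (fun q : {p : (⊤ : Subgroup G) × MulAut G // p.2 (p.1 : G) = (p.1 : G)} =>
        ((q : (⊤ : Subgroup G) × MulAut G).1.1 : G)) hp
    rw [← hg]
    exact p.1.1.2
  · rintro rfl
    rw [Subgroup.index_top]
    norm_num
end

section
/- Let H be a subgroup of a finite group G with H ≠ L(H, Aut(G)), and let p be the smallest prime dividing |Aut(G)|. Then Pr(H, Aut(G)) ≤ ((p − 1)·|L(H, Aut(G))| + |H|)/(p·|H|) − |X_H|·(|Aut(G)| − p)/(p·|H|·|Aut(G)|), where X_H = {x ∈ H : C_{Aut(G)}(x) = {id}}. -/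
open scoped Classical

variable {G : Type*}

theorem stmt5 [Group G] [Fintype G] [DecidableEq G] (H : Subgroup G)
    (hne : H ≠ autFix H) (p : ℕ) (hp : p.Prime) (hpdvd : p ∣ Nat.card (MulAut G))
    (hpmin : ∀ r : ℕ, r.Prime → r ∣ Nat.card (MulAut G) → p ≤ r) :
    autPr H ≤
      (((p : ℚ) - 1) * (Nat.card (autFix H) : ℚ) + (Nat.card H : ℚ))
          / ((p : ℚ) * (Nat.card H : ℚ))
        - (Nat.card (autX H) : ℚ) * ((Nat.card (MulAut G) : ℚ) - (p : ℚ))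
          / ((p : ℚ) * (Nat.card H : ℚ) * (Nat.card (MulAut G) : ℚ)) := by

  classical
  set N : ℕ := Nat.card (MulAut G) with hN
  set hh : ℕ := Nat.card H with hhh
  have hN0 : 0 < N := Nat.card_pos
  have hh0 : 0 < hh := Nat.card_pos
  have hp0 : 0 < p := hp.pos
  have hpQ : (0:ℚ) < p := by exact_mod_cast hp0
  have hNQ : (0:ℚ) < N := by exact_mod_cast hN0
  have hhQ : (0:ℚ) < hh := by exact_mod_cast hh0
  -- rewrite the pair count as a sum over H
  have key : (Nat.card {q : H × MulAut G // q.2 (q.1 : G) = (q.1 : G)} : ℚ)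
      = ∑ x : H, (Nat.card {α : MulAut G // α (x : G) = x} : ℚ) := by
    rw [Nat.card_congr (Equiv.subtypeProdEquivSigmaSubtype
      (fun (x : H) (α : MulAut G) => α (x : G) = (x : G)))]
    rw [Nat.card_eq_fintype_card, Fintype.card_sigma, Nat.cast_sum]
    congr 1
    ext x
    rw [Nat.card_eq_fintype_card]
  -- disjointness of the two special classes
  have hPQ : ∀ x : H, (x : G) ∈ autFix H → x ∈ autX H → False := by
    intro x hx hq
    have hall : ∀ α : MulAut G, α = 1 := fun α => hq α (hx.2 α)
    have hone : N = 1 := by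
      haveI : Unique (MulAut G) := { default := 1, uniq := hall }
      rw [hN]; exact Nat.card_unique
    rw [hone] at hpdvd
    exact hp.one_lt.ne' (Nat.dvd_one.mp hpdvd)
  -- pointwise bound
  have pointwise : ∀ x : H,
      (Nat.card {α : MulAut G // α (x : G) = x} : ℚ) ≤
        (N : ℚ)/p + ((N : ℚ) - (N : ℚ)/p) * (if (x : G) ∈ autFix H then 1 else 0)
          + (1 - (N : ℚ)/p) * (if x ∈ autX H then 1 else 0) := by
    intro x
    by_cases hP : (x : G) ∈ autFix H
    · have hQ : x ∉ autX H := fun hq => hPQ x hP hq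
      rw [if_pos hP, if_neg hQ]
      have hcard : Nat.card {α : MulAut G // α (x : G) = x} = N := by
        rw [hN]; exact Nat.card_congr (Equiv.subtypeUnivEquiv hP.2)
      rw [hcard]
      have : (N:ℚ)/p + ((N:ℚ) - (N:ℚ)/p) * 1 + (1 - (N:ℚ)/p) * 0 = N := by ring
      rw [this]
    · by_cases hQ : x ∈ autX H
      · rw [if_neg hP, if_pos hQ]
        have hcard : Nat.card {α : MulAut G // α (x : G) = x} = 1 := by
          haveI : Unique {α : MulAut G // α (x : G) = x} :=
            { default := ⟨1, by simp⟩,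
              uniq := fun a => Subtype.ext (hQ a a.2) }
          exact Nat.card_unique
        rw [hcard]
        have : (N:ℚ)/p + ((N:ℚ) - (N:ℚ)/p) * 0 + (1 - (N:ℚ)/p) * 1 = 1 := by ring
        rw [this, Nat.cast_one]
      · rw [if_neg hP, if_neg hQ]
        set K := MulAction.stabilizer (MulAut G) ((x : G)) with hK
        have hcardK : Nat.card {α : MulAut G // α (x : G) = x} = Nat.card K := by
          apply Nat.card_congr (Equiv.subtypeEquivRight _)
          intro α
          simp [hK, MulAction.mem_stabilizer_iff, MulAut.smul_def]
        have hKtop : K ≠ ⊤ := by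
          intro htop
          apply hP
          refine ⟨x.2, fun α => ?_⟩
          have hmem : α ∈ K := htop ▸ Subgroup.mem_top α
          simpa [hK, MulAction.mem_stabilizer_iff, MulAut.smul_def] using hmem
        have hidx1 : K.index ≠ 1 := fun e => hKtop (Subgroup.index_eq_one.mp e)
        have hidxdvd : K.index ∣ N := Subgroup.index_dvd_card K
        have hidx0 : K.index ≠ 0 := by
          intro e
          rw [e] at hidxdvd
          exact hN0.ne' (Nat.eq_zero_of_zero_dvd hidxdvd)
        have hpidx : p ≤ K.index := by
          have hr := Nat.minFac_prime hidx1
          have hdvd : K.index.minFac ∣ N := (Nat.minFac_dvd _).trans hidxdvd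
          exact le_trans (hpmin _ hr hdvd) (Nat.minFac_le (Nat.pos_of_ne_zero hidx0))
        have hmul : Nat.card K * K.index = N := Subgroup.card_mul_index K
        have hb : p * Nat.card K ≤ N := by
          calc p * Nat.card K ≤ K.index * Nat.card K :=
                Nat.mul_le_mul_right _ hpidx
            _ = N := by rw [mul_comm]; exact hmul
        rw [hcardK]
        have hbQ : (p : ℚ) * (Nat.card K : ℚ) ≤ N := by exact_mod_cast hb
        rw [mul_zero, mul_zero, add_zero, add_zero, le_div_iff₀ hpQ]
        linarith
  -- count the special classes
  have hL : ((Finset.univ.filter (fun x : H => (x : G) ∈ autFix H)).card : ℚ)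
      = (Nat.card (autFix H) : ℚ) := by
    have hle : autFix H ≤ H := fun g hg => hg.1
    have e1 : {x : H // (x : G) ∈ autFix H} ≃ ((autFix H).subgroupOf H) :=
      Equiv.subtypeEquivRight (fun x => (Subgroup.mem_subgroupOf).symm)
    have : Nat.card {x : H // (x : G) ∈ autFix H} = Nat.card (autFix H) := by
      rw [Nat.card_congr e1, Nat.card_congr (Subgroup.subgroupOfEquivOfLe hle).toEquiv]
    rw [← this, Nat.card_eq_fintype_card, Fintype.card_subtype]
  have hX : ((Finset.univ.filter (fun x : H => x ∈ autX H)).card : ℚ)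
      = (Nat.card (autX H) : ℚ) := by
    rw [Nat.card_eq_fintype_card]
    congr 1
    rw [Fintype.card_subtype]
  -- sum bound
  have hsum : (∑ x : H, (Nat.card {α : MulAut G // α (x : G) = x} : ℚ)) ≤
      (hh : ℚ) * ((N:ℚ)/p) + ((N:ℚ) - (N:ℚ)/p) * (Nat.card (autFix H) : ℚ)
        + (1 - (N:ℚ)/p) * (Nat.card (autX H) : ℚ) := by
    calc (∑ x : H, (Nat.card {α : MulAut G // α (x : G) = x} : ℚ))
        ≤ ∑ x : H, ((N : ℚ)/p + ((N : ℚ) - (N : ℚ)/p) * (if (x : G) ∈ autFix H then 1 else 0)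
            + (1 - (N : ℚ)/p) * (if x ∈ autX H then 1 else 0)) :=
          Finset.sum_le_sum (fun x _ => pointwise x)
      _ = (hh : ℚ) * ((N:ℚ)/p) + ((N:ℚ) - (N:ℚ)/p) * (Nat.card (autFix H) : ℚ)
            + (1 - (N:ℚ)/p) * (Nat.card (autX H) : ℚ) := by
          rw [Finset.sum_add_distrib, Finset.sum_add_distrib, Finset.sum_const,
            ← Finset.mul_sum, ← Finset.mul_sum, Finset.sum_boole, Finset.sum_boole,
            hL, hX, Finset.card_univ, nsmul_eq_mul]
          congr 2
          rw [hhh, Nat.card_eq_fintype_card]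
  -- conclude
  rw [autPr, ← hN, ← hhh, key]
  have hhn : (0:ℚ) < (hh : ℚ) * (N : ℚ) := mul_pos hhQ hNQ
  calc (∑ x : H, (Nat.card {α : MulAut G // α (x : G) = x} : ℚ)) / ((hh : ℚ) * (N : ℚ))
      ≤ ((hh : ℚ) * ((N:ℚ)/p) + ((N:ℚ) - (N:ℚ)/p) * (Nat.card (autFix H) : ℚ)
          + (1 - (N:ℚ)/p) * (Nat.card (autX H) : ℚ)) / ((hh : ℚ) * (N : ℚ)) := by
        gcongr
    _ = (((p : ℚ) - 1) * (Nat.card (autFix H) : ℚ) + (hh : ℚ))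
          / ((p : ℚ) * (hh : ℚ))
        - (Nat.card (autX H) : ℚ) * ((N : ℚ) - (p : ℚ))
          / ((p : ℚ) * (hh : ℚ) * (N : ℚ)) := by
        field_simp
        ring
end

section
/- Let H be a subgroup of a finite group G with H ≠ L(H, Aut(G)). If p is the smallest prime dividing |Aut(G)| and q is the smallest prime dividing |H|, then Pr(H, Aut(G)) ≤ (p + q − 1)/(pq). In particular, if q ≥ p then Pr(H, Aut(G)) ≤ (2p − 1)/p² ≤ 3/4. -/
open scoped Classical

variable {G : Type*}

lemma aux34 (p : ℕ) (hp2 : 2 ≤ p) : (2 * (p : ℚ) - 1) / (p : ℚ) ^ 2 ≤ 3 / 4 := by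
  have hpQ : (2:ℚ) ≤ p := by exact_mod_cast hp2
  rw [div_le_div_iff₀ (by positivity) (by norm_num : (0:ℚ) < 4)]
  nlinarith [sq_nonneg ((p : ℚ) - 2)]

theorem stmt6 [Group G] [Fintype G] [DecidableEq G] (H : Subgroup G)
    (hne : H ≠ autFix H) (p q : ℕ)
    (hp : p.Prime) (hpdvd : p ∣ Nat.card (MulAut G))
    (hpmin : ∀ r : ℕ, r.Prime → r ∣ Nat.card (MulAut G) → p ≤ r)
    (hq : q.Prime) (hqdvd : q ∣ Nat.card H)
    (hqmin : ∀ r : ℕ, r.Prime → r ∣ Nat.card H → q ≤ r) :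
    autPr H ≤ ((p : ℚ) + (q : ℚ) - 1) / ((p : ℚ) * (q : ℚ))
    ∧ (p ≤ q →
        autPr H ≤ (2 * (p : ℚ) - 1) / (p : ℚ) ^ 2
        ∧ (2 * (p : ℚ) - 1) / (p : ℚ) ^ 2 ≤ 3 / 4) := by
  classical
  -- notation
  set a := Nat.card (MulAut G) with ha_def
  set h := Nat.card H with hh_def
  let L : Subgroup H := (autFix H).subgroupOf H
  set ℓ := Nat.card L with hl_def
  -- basic positivity
  have ha_pos : 0 < a := Nat.card_pos
  have hh_pos : 0 < h := Nat.card_pos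
  have hp2 : 2 ≤ p := hp.two_le
  have hq2 : 2 ≤ q := hq.two_le
  -- the number of fixed pairs as a sum of stabilizer cards
  set N := Nat.card {pr : H × MulAut G // pr.2 (pr.1 : G) = (pr.1 : G)} with hN_def
  have key : N = ∑ x : H, Nat.card (MulAction.stabilizer (MulAut G) (x : G)) := by
    have e : {pr : H × MulAut G // pr.2 (pr.1 : G) = (pr.1 : G)} ≃
        Σ x : H, {α : MulAut G // α (x : G) = (x : G)} :=
      { toFun := fun pr => ⟨pr.1.1, pr.1.2, pr.2⟩
        invFun := fun s => ⟨(s.1, s.2.1), s.2.2⟩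
        left_inv := fun pr => rfl
        right_inv := fun s => rfl }
    rw [hN_def, Nat.card_congr e, Nat.card_eq_fintype_card, Fintype.card_sigma]
    refine Finset.sum_congr rfl fun x _ => ?_
    simp only [Nat.card_eq_fintype_card]
    exact Fintype.card_congr (Equiv.subtypeEquivRight fun α => by
      simp [MulAction.mem_stabilizer_iff, MulAut.smul_def])
  -- for x ∈ L, stabilizer is everything
  have hfix_card : ∀ x : H, x ∈ L →
      Nat.card (MulAction.stabilizer (MulAut G) (x : G)) = a := by
    intro x hx
    rw [Subgroup.mem_subgroupOf] at hx
    have htop : MulAction.stabilizer (MulAut G) (x : G) = ⊤ := by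
      ext α
      simp only [Subgroup.mem_top, iff_true, MulAction.mem_stabilizer_iff]
      exact hx.2 α
    rw [htop, ha_def]
    exact Subgroup.card_top
  -- for x ∉ L, stabilizer is proper, so its index is at least p
  have hbound : ∀ x : H, x ∉ L →
      p * Nat.card (MulAction.stabilizer (MulAut G) (x : G)) ≤ a := by
    intro x hx
    set S := MulAction.stabilizer (MulAut G) (x : G) with hS_def
    have hSne : S ≠ ⊤ := by
      intro htop
      apply hx
      rw [Subgroup.mem_subgroupOf]
      refine ⟨x.2, fun α => ?_⟩
      have : α ∈ S := htop ▸ Subgroup.mem_top α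
      simpa [hS_def, MulAction.mem_stabilizer_iff, MulAut.smul_def] using this
    have hidx1 : S.index ≠ 1 := fun h1 => hSne (Subgroup.index_eq_one.mp h1)
    have hidx0 : S.index ≠ 0 := S.index_ne_zero_of_finite
    have hdvd : S.index ∣ a := S.index_dvd_card
    have hple : p ≤ S.index := by
      have hmf : S.index.minFac ∣ a := (Nat.minFac_dvd _).trans hdvd
      exact le_trans (hpmin _ (Nat.minFac_prime hidx1) hmf)
        (Nat.minFac_le (Nat.pos_of_ne_zero hidx0))
    calc p * Nat.card S ≤ S.index * Nat.card S :=
          Nat.mul_le_mul_right _ hple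
      _ = a := by rw [mul_comm]; exact S.card_mul_index
  -- ℓ is at most h / q
  have hLbound : q * ℓ ≤ h := by
    have hLne : L ≠ ⊤ := by
      intro htop
      apply hne
      have h1 : H ≤ autFix H := Subgroup.subgroupOf_eq_top.mp htop
      have h2 : autFix H ≤ H := fun y hy => hy.1
      exact le_antisymm h1 h2
    have hidx1 : L.index ≠ 1 := fun h1 => hLne (Subgroup.index_eq_one.mp h1)
    have hidx0 : L.index ≠ 0 := L.index_ne_zero_of_finite
    have hdvd : L.index ∣ h := L.index_dvd_card
    have hqle : q ≤ L.index := by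
      have hmf : L.index.minFac ∣ h := (Nat.minFac_dvd _).trans hdvd
      exact le_trans (hqmin _ (Nat.minFac_prime hidx1) hmf)
        (Nat.minFac_le (Nat.pos_of_ne_zero hidx0))
    calc q * ℓ ≤ L.index * ℓ := Nat.mul_le_mul_right _ hqle
      _ = h := by rw [mul_comm, hl_def, hh_def]; exact L.card_mul_index
  have hl_le_h : ℓ ≤ h := le_trans (Nat.le_mul_of_pos_left ℓ (by omega)) hLbound
  -- the main counting estimate: p * N ≤ p * ℓ * a + (h - ℓ) * a
  have hmain : p * N ≤ p * ℓ * a + (h - ℓ) * a := by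
    rw [key, Finset.mul_sum]
    rw [← Finset.sum_filter_add_sum_filter_not Finset.univ (fun x : H => x ∈ L)]
    have h1 : ∑ x ∈ Finset.univ.filter (fun x : H => x ∈ L),
        p * Nat.card (MulAction.stabilizer (MulAut G) (x : G)) = p * ℓ * a := by
      rw [Finset.sum_congr rfl (fun x hx => by
        rw [hfix_card x (Finset.mem_filter.mp hx).2])]
      rw [Finset.sum_const, smul_eq_mul]
      have : (Finset.univ.filter (fun x : H => x ∈ L)).card = ℓ := by
        rw [hl_def, Nat.card_eq_fintype_card, Fintype.card_subtype]
      rw [this]; ring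
    have h2 : ∑ x ∈ Finset.univ.filter (fun x : H => ¬ x ∈ L),
        p * Nat.card (MulAction.stabilizer (MulAut G) (x : G)) ≤ (h - ℓ) * a := by
      have hcard : (Finset.univ.filter (fun x : H => ¬ x ∈ L)).card = h - ℓ := by
        rw [Finset.filter_not, Finset.card_sdiff_of_subset (Finset.filter_subset _ _),
          Finset.card_univ]
        congr 1
        · rw [hh_def, Nat.card_eq_fintype_card]
        · rw [hl_def, Nat.card_eq_fintype_card, Fintype.card_subtype]
      calc ∑ x ∈ Finset.univ.filter (fun x : H => ¬ x ∈ L),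
            p * Nat.card (MulAction.stabilizer (MulAut G) (x : G))
          ≤ ∑ _x ∈ Finset.univ.filter (fun x : H => ¬ x ∈ L), a :=
            Finset.sum_le_sum (fun x hx => hbound x (Finset.mem_filter.mp hx).2)
        _ = (h - ℓ) * a := by rw [Finset.sum_const, smul_eq_mul, hcard]
    omega
  -- now pass to ℚ
  have hcast : ((h : ℚ) - (ℓ : ℚ)) = ((h - ℓ : ℕ) : ℚ) := by
    rw [Nat.cast_sub hl_le_h]
  have hmainQ : (p : ℚ) * N ≤ (p : ℚ) * ℓ * a + ((h : ℚ) - ℓ) * a := by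
    rw [hcast]
    exact_mod_cast hmain
  have hLQ : (q : ℚ) * ℓ ≤ (h : ℚ) := by exact_mod_cast hLbound
  have hpQ : (2 : ℚ) ≤ p := by exact_mod_cast hp2
  have hqQ : (2 : ℚ) ≤ q := by exact_mod_cast hq2
  have haQ : (0 : ℚ) < a := by exact_mod_cast ha_pos
  have hhQ : (0 : ℚ) < h := by exact_mod_cast hh_pos
  have hNQ : (0 : ℚ) ≤ N := by positivity
  have hpr : autPr H = (N : ℚ) / ((h : ℚ) * (a : ℚ)) := rfl
  have goal1 : autPr H ≤ ((p : ℚ) + (q : ℚ) - 1) / ((p : ℚ) * (q : ℚ)) := by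
    rw [hpr, div_le_div_iff₀ (by positivity) (by positivity)]
    nlinarith [mul_le_mul_of_nonneg_right hLQ
        (by nlinarith : (0 : ℚ) ≤ ((p : ℚ) - 1) * a),
      mul_le_mul_of_nonneg_left hmainQ (by positivity : (0 : ℚ) ≤ (q : ℚ))]
  refine ⟨goal1, fun hpq => ?_⟩
  have hpqQ : (p : ℚ) ≤ q := by exact_mod_cast hpq
  constructor
  · refine le_trans goal1 ?_
    rw [div_le_div_iff₀ (by positivity) (by positivity)]
    nlinarith [mul_nonneg (sub_nonneg.mpr hpqQ) (by nlinarith : (0:ℚ) ≤ (p:ℚ) - 1),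
      mul_pos (by positivity : (0:ℚ) < (p:ℚ)) (by positivity : (0:ℚ) < (q:ℚ))]
  · exact aux34 p hp2
end

section
/- Let H be a non-abelian subgroup of a finite group G. If p is the smallest prime dividing |Aut(G)| and q is the smallest prime dividing |H|, then Pr(H, Aut(G)) ≤ (q² + p − 1)/(pq²). In particular, if q ≥ p then Pr(H, Aut(G)) ≤ (p² + p − 1)/p³ ≤ 5/8. -/
open scoped Classical

variable {G : Type*}

section AuxLemmas

lemma center_index_ge (N : Type*) [Group N] [Finite N]
    (hna : ¬ ∀ a b : N, a * b = b * a) (q : ℕ)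
    (hq : q.Prime) (hqmin : ∀ r : ℕ, r.Prime → r ∣ Nat.card N → q ≤ r) :
    q * q ≤ (Subgroup.center N).index := by
  set n := (Subgroup.center N).index with hn
  have hdvd : n ∣ Nat.card N := Subgroup.index_dvd_card _
  have hcardpos : 0 < Nat.card N := Nat.card_pos
  have hn0 : n ≠ 0 := by
    intro h
    rw [h, Nat.zero_dvd] at hdvd
    omega
  have hn1 : n ≠ 1 := by
    intro h
    apply hna
    have htop : Subgroup.center N = ⊤ := Subgroup.index_eq_one.mp h
    intro a b
    have hb : b ∈ Subgroup.center N := htop ▸ Subgroup.mem_top b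
    exact Subgroup.mem_center_iff.mp hb a
  have hnp : ¬ n.Prime := by
    intro hnp
    haveI : Fact n.Prime := ⟨hnp⟩
    have hcyc : IsCyclic (N ⧸ Subgroup.center N) :=
      isCyclic_of_prime_card ((Subgroup.index_eq_card _).symm.trans hn.symm)
    exact hna (commutative_of_cyclic_center_quotient (QuotientGroup.mk' _)
      (le_of_eq (QuotientGroup.ker_mk' _)))
  -- arithmetic: n > 1, not prime, divides card N, all prime factors ≥ q
  set r := n.minFac with hr
  have hrp : r.Prime := Nat.minFac_prime hn1
  have hrdvd : r ∣ n := Nat.minFac_dvd n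
  set m := n / r with hm
  have hrm : r * m = n := Nat.mul_div_cancel' hrdvd
  have hm1 : m ≠ 1 := by
    intro h
    rw [h, mul_one] at hrm
    exact hnp (hrm ▸ hrp)
  have hm0 : m ≠ 0 := by
    intro h
    rw [h, mul_zero] at hrm
    exact hn0 hrm.symm
  set s := m.minFac with hs
  have hsp : s.Prime := Nat.minFac_prime hm1
  have hsm : s ≤ m := Nat.minFac_le (Nat.pos_of_ne_zero hm0)
  have hqr : q ≤ r := hqmin r hrp ((hrdvd.trans hdvd))
  have hqs : q ≤ s := hqmin s hsp (((Nat.minFac_dvd m).trans ⟨r, by rw [← hrm, mul_comm]⟩).trans hdvd)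
  calc q * q ≤ r * s := Nat.mul_le_mul hqr hqs
    _ ≤ r * m := Nat.mul_le_mul_left r hsm
    _ = n := hrm

lemma stab_bound {G : Type*} [Group G] [Finite G] (p : ℕ)
    (hpmin : ∀ r : ℕ, r.Prime → r ∣ Nat.card (MulAut G) → p ≤ r)
    (x : G) (hx : ¬ ∀ α : MulAut G, α x = x) :
    p * Nat.card {α : MulAut G // α x = x} ≤ Nat.card (MulAut G) := by
  set St : Subgroup (MulAut G) := MulAction.stabilizer (MulAut G) x with hSt
  have hcard : Nat.card {α : MulAut G // α x = x} = Nat.card St :=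
    Nat.card_congr (Equiv.subtypeEquivRight fun α => by
      simp [hSt, MulAction.mem_stabilizer_iff, MulAut.smul_def])
  rw [hcard]
  have hmul : Nat.card St * St.index = Nat.card (MulAut G) := Subgroup.card_mul_index St
  have hne : St ≠ ⊤ := by
    intro h
    apply hx
    intro α
    have hα : α ∈ St := h ▸ Subgroup.mem_top α
    simpa [hSt, MulAction.mem_stabilizer_iff, MulAut.smul_def] using hα
  have hidx1 : St.index ≠ 1 := fun h => hne (Subgroup.index_eq_one.mp h)
  have hr : (St.index).minFac.Prime := Nat.minFac_prime hidx1
  have hrdvd : (St.index).minFac ∣ Nat.card (MulAut G) :=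
    (Nat.minFac_dvd _).trans (Subgroup.index_dvd_card St)
  have hidx0 : St.index ≠ 0 := by
    intro h
    have h2 := Nat.card_pos (α := MulAut G)
    rw [← hmul, h, mul_zero] at h2
    omega
  have hps : p ≤ St.index :=
    (hpmin _ hr hrdvd).trans (Nat.minFac_le (Nat.pos_of_ne_zero hidx0))
  calc p * Nat.card St ≤ St.index * Nat.card St := Nat.mul_le_mul_right _ hps
    _ = Nat.card (MulAut G) := by rw [mul_comm]; exact hmul

end AuxLemmas

set_option maxHeartbeats 1600000 in
theorem stmt7 [Group G] [Fintype G] [DecidableEq G] (H : Subgroup G)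
    (hna : ¬ IsMulCommutative H) (p q : ℕ)
    (hp : p.Prime) (hpdvd : p ∣ Nat.card (MulAut G))
    (hpmin : ∀ r : ℕ, r.Prime → r ∣ Nat.card (MulAut G) → p ≤ r)
    (hq : q.Prime) (hqdvd : q ∣ Nat.card H)
    (hqmin : ∀ r : ℕ, r.Prime → r ∣ Nat.card H → q ≤ r) :
    autPr H ≤ ((q : ℚ) ^ 2 + (p : ℚ) - 1) / ((p : ℚ) * (q : ℚ) ^ 2)
    ∧ (p ≤ q →
        autPr H ≤ ((p : ℚ) ^ 2 + (p : ℚ) - 1) / (p : ℚ) ^ 3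
        ∧ ((p : ℚ) ^ 2 + (p : ℚ) - 1) / (p : ℚ) ^ 3 ≤ 5 / 8) := by
  -- notation
  set N := Nat.card (MulAut G) with hN
  set hH := Nat.card H with hhH
  set Count := Nat.card {pr : H × MulAut G // pr.2 (pr.1 : G) = (pr.1 : G)} with hC
  have hna' : ¬ ∀ a b : H, a * b = b * a := fun h => hna ⟨⟨h⟩⟩
  -- the fixed-element condition
  set cond : H → Prop := fun x => ∀ α : MulAut G, α (x : G) = (x : G) with hcond
  -- sum decomposition
  have hsum : Count = ∑ x : H, Nat.card {α : MulAut G // α (x : G) = (x : G)} := by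
    rw [hC, Nat.card_congr (Equiv.subtypeProdEquivSigmaSubtype
      (fun (x : H) (α : MulAut G) => α (x : G) = (x : G)))]
    rw [Nat.card_eq_fintype_card, Fintype.card_sigma]
    exact Finset.sum_congr rfl fun x _ => (Nat.card_eq_fintype_card).symm
  set k := (Finset.univ.filter cond).card with hk
  set nk := (Finset.univ.filter fun x => ¬ cond x).card with hnk
  have hknk : k + nk = hH := by
    rw [hk, hnk, Finset.card_filter_add_card_filter_not, hhH,
      Nat.card_eq_fintype_card, Finset.card_univ]
  -- elements satisfying cond are central in H
  have hcentral : ∀ x : H, cond x → x ∈ Subgroup.center H := by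
    intro x hx
    rw [Subgroup.mem_center_iff]
    intro g
    apply Subtype.ext
    push_cast
    have h := hx (MulAut.conj (g : G))
    simp only [MulAut.conj_apply] at h
    exact mul_inv_eq_iff_eq_mul.mp h
  -- k is at most the cardinality of the center
  have hkZ : k ≤ Nat.card (Subgroup.center H) := by
    rw [hk, ← Fintype.card_subtype, Nat.card_eq_fintype_card]
    exact Fintype.card_le_of_injective
      (fun x => (⟨x.1, hcentral x.1 x.2⟩ : Subgroup.center H))
      (fun a b hab => Subtype.ext (Subtype.mk_eq_mk.mp hab))
  -- center index bound
  have hidx : q * q ≤ (Subgroup.center H).index :=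
    center_index_ge H hna' q hq (by rwa [hhH] at hqmin)
  have hkq : q * q * k ≤ hH := by
    calc q * q * k ≤ (Subgroup.center H).index * Nat.card (Subgroup.center H) :=
          Nat.mul_le_mul hidx hkZ
      _ = hH := by rw [mul_comm, Subgroup.card_mul_index]
  -- per-element bounds
  have hbound : ∀ x : H, p * Nat.card {α : MulAut G // α (x : G) = (x : G)} ≤
      if cond x then p * N else N := by
    intro x
    by_cases hx : cond x
    · rw [if_pos hx]
      have : Nat.card {α : MulAut G // α (x : G) = (x : G)} = N := by
        rw [hN]
        exact Nat.card_congr (Equiv.subtypeUnivEquiv hx)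
      rw [this]
    · rw [if_neg hx]
      exact stab_bound p hpmin (x : G) hx
  -- total bound
  have hmain : p * Count + k * N ≤ k * (p * N) + hH * N := by
    have h2 : p * Count ≤ k * (p * N) + nk * N := by
      rw [hsum, Finset.mul_sum]
      calc ∑ x : H, p * Nat.card {α : MulAut G // α (x : G) = (x : G)}
          ≤ ∑ x : H, (if cond x then p * N else N) :=
            Finset.sum_le_sum fun x _ => hbound x
        _ = k * (p * N) + nk * N := by
            rw [Finset.sum_ite, Finset.sum_const, Finset.sum_const, smul_eq_mul, smul_eq_mul]
    calc p * Count + k * N ≤ k * (p * N) + nk * N + k * N := Nat.add_le_add_right h2 _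
      _ = k * (p * N) + hH * N := by rw [add_assoc, ← Nat.add_mul, Nat.add_comm nk k, hknk]
  -- pass to rationals
  have hHpos : 0 < hH := by rw [hhH]; exact Nat.card_pos
  have hNpos : 0 < N := by rw [hN]; exact Nat.card_pos
  have hp2 : (2 : ℚ) ≤ (p : ℚ) := by exact_mod_cast hp.two_le
  have hq2 : (2 : ℚ) ≤ (q : ℚ) := by exact_mod_cast hq.two_le
  have hHQ : (0 : ℚ) < (hH : ℚ) := by exact_mod_cast hHpos
  have hNQ : (0 : ℚ) < (N : ℚ) := by exact_mod_cast hNpos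
  have hA : (p : ℚ) * Count + (k : ℚ) * N ≤ (k : ℚ) * ((p : ℚ) * N) + (hH : ℚ) * N := by
    exact_mod_cast hmain
  have hB : (q : ℚ) ^ 2 * (k : ℚ) ≤ (hH : ℚ) := by
    have : ((q * q * k : ℕ) : ℚ) ≤ ((hH : ℕ) : ℚ) := by exact_mod_cast hkq
    push_cast at this
    nlinarith [this]
  have hCnn : (0 : ℚ) ≤ (Count : ℚ) := Nat.cast_nonneg _
  have hknn : (0 : ℚ) ≤ (k : ℚ) := Nat.cast_nonneg _
  have hPr : autPr H = (Count : ℚ) / ((hH : ℚ) * (N : ℚ)) := rfl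
  have goal1 : autPr H ≤ ((q : ℚ) ^ 2 + (p : ℚ) - 1) / ((p : ℚ) * (q : ℚ) ^ 2) := by
    rw [hPr, div_le_div_iff₀ (by positivity) (by positivity)]
    have h1 := mul_le_mul_of_nonneg_left hA (by positivity : (0:ℚ) ≤ (q : ℚ) ^ 2)
    have h2 := mul_le_mul_of_nonneg_right hB
      (by nlinarith : (0:ℚ) ≤ ((p : ℚ) - 1) * (N : ℚ))
    nlinarith [h1, h2]
  refine ⟨goal1, fun hpq => ?_⟩
  have hpqQ : (p : ℚ) ≤ (q : ℚ) := by exact_mod_cast hpq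
  have goal3 : ((p : ℚ) ^ 2 + (p : ℚ) - 1) / (p : ℚ) ^ 3 ≤ 5 / 8 := by
    rw [div_le_div_iff₀ (by positivity) (by norm_num)]
    nlinarith [mul_nonneg (by linarith : (0:ℚ) ≤ (p:ℚ) - 2)
      (by nlinarith : (0:ℚ) ≤ 5 * (p:ℚ)^2 + 2 * (p:ℚ) - 4)]
  refine ⟨?_, goal3⟩
  refine goal1.trans ?_
  rw [div_le_div_iff₀ (by positivity) (by positivity)]
  nlinarith [mul_nonneg (mul_nonneg (by linarith : (0:ℚ) ≤ (p:ℚ))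
    (by linarith : (0:ℚ) ≤ (p:ℚ) - 1))
    (mul_nonneg (by linarith : (0:ℚ) ≤ (q:ℚ) - (p:ℚ)) (by linarith : (0:ℚ) ≤ (q:ℚ) + (p:ℚ)))]
end

section
/- Let H be a subgroup of a finite group G with H ≠ L(H, Aut(G)). Suppose p is the smallest prime dividing |Aut(G)| and q is the smallest prime dividing |H|, and Pr(H, Aut(G)) = (p + q − 1)/(pq). Then the quotient group H / L(H, Aut(G)) is isomorphic to the cyclic group ℤ_q of order q. -/
open scoped Classical

variable {G : Type*}

theorem stmt9 [Group G] [Fintype G] [DecidableEq G] (H : Subgroup G)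
    (hne : H ≠ autFix H) (p q : ℕ)
    (hp : p.Prime) (hpdvd : p ∣ Nat.card (MulAut G))
    (hpmin : ∀ r : ℕ, r.Prime → r ∣ Nat.card (MulAut G) → p ≤ r)
    (hq : q.Prime) (hqdvd : q ∣ Nat.card H)
    (hqmin : ∀ r : ℕ, r.Prime → r ∣ Nat.card H → q ≤ r)
    (h : autPr H = ((p : ℚ) + (q : ℚ) - 1) / ((p : ℚ) * (q : ℚ))) :
    Nonempty ((H ⧸ (autFix H).subgroupOf H) ≃* Multiplicative (ZMod q)) := by
  classical
  set a := Nat.card (MulAut G) with ha_def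
  set hh := Nat.card H with hh_def
  set L := (autFix H).subgroupOf H with L_def
  set l := Nat.card L with l_def
  have ha0 : 0 < a := Nat.card_pos
  have hh0 : 0 < hh := Nat.card_pos
  have hl0 : 0 < l := Nat.card_pos
  set f : H → ℕ := fun x => Nat.card {α : MulAut G // α (x : G) = (x : G)} with f_def
  set N := Nat.card {r : H × MulAut G // r.2 (r.1 : G) = (r.1 : G)} with N_def
  have hN : N = ∑ x : H, f x := by
    rw [N_def, Nat.card_congr (Equiv.subtypeProdEquivSigmaSubtype
      (fun (x : H) (α : MulAut G) => α (x : G) = (x : G)))]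
    simp [Nat.card_eq_fintype_card, Fintype.card_sigma, f_def]
  have hfix : ∀ x : H, (x : G) ∈ autFix H → f x = a := by
    intro x hx
    have : ∀ α : MulAut G, α (x : G) = (x : G) := hx.2
    simp only [f_def]
    rw [Nat.card_congr (Equiv.subtypeUnivEquiv this)]
  have hnonfix : ∀ x : H, (x : G) ∉ autFix H → p * f x ≤ a := by
    intro x hx
    set S : Subgroup (MulAut G) := MulAction.stabilizer (MulAut G) (x : G) with S_def
    have hfS : f x = Nat.card S := by
      apply Nat.card_congr
      exact Equiv.subtypeEquivRight fun α => by
        simp [S_def, MulAction.mem_stabilizer_iff, MulAut.smul_def]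
    have hmul : Nat.card S * S.index = a := S.card_mul_index
    have hidx1 : S.index ≠ 1 := by
      intro h1
      have hst : S = ⊤ := Subgroup.index_eq_one.mp h1
      exact hx ⟨x.2, fun α => by
        have : α ∈ S := hst ▸ Subgroup.mem_top α
        simpa [S_def, MulAction.mem_stabilizer_iff, MulAut.smul_def] using this⟩
    have hidx0 : 0 < S.index := by
      rcases Nat.eq_zero_or_pos S.index with h0 | h0
      · rw [h0, mul_zero] at hmul; omega
      · exact h0
    have hple : p ≤ S.index := by
      have hr := Nat.minFac_prime hidx1
      have : S.index.minFac ∣ a := (Nat.minFac_dvd _).trans ⟨Nat.card S, by rw [← hmul]; ring⟩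
      exact le_trans (hpmin _ hr this) (Nat.minFac_le hidx0)
    calc p * f x = p * Nat.card S := by rw [hfS]
      _ ≤ S.index * Nat.card S := Nat.mul_le_mul_right _ hple
      _ = a := by rw [mul_comm]; exact hmul
  set T : Finset H := Finset.univ.filter (fun x : H => (x : G) ∈ autFix H) with T_def
  have hTcard : T.card = l := by
    rw [l_def, Nat.card_eq_fintype_card, Fintype.card_subtype]
    apply Finset.card_nbij id (fun x hx => by simpa [T_def, L_def, Subgroup.mem_subgroupOf] using hx)
      (fun x _ hy _ hxy => hxy)
      (fun x hx => ⟨x, by simpa [T_def, L_def, Subgroup.mem_subgroupOf] using hx, rfl⟩)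
  have hTc : T.card + Tᶜ.card = hh := by
    rw [Finset.card_add_card_compl, hh_def, Nat.card_eq_fintype_card]
  have hsum : p * N ≤ p * a * l + Tᶜ.card * a := by
    rw [hN, Finset.mul_sum, ← Finset.sum_add_sum_compl T]
    have h1' : ∑ x ∈ T, p * f x = p * a * l := by
      rw [Finset.sum_congr rfl (fun x hx => by
        rw [hfix x (by simpa [T_def] using hx)]), Finset.sum_const, smul_eq_mul, hTcard]
      ring
    have h2' : ∑ x ∈ Tᶜ, p * f x ≤ Tᶜ.card * a := by
      rw [← smul_eq_mul, ← Finset.sum_const]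
      exact Finset.sum_le_sum fun x hx => hnonfix x (by simpa [T_def] using hx)
    omega
  have hp2 : 2 ≤ p := hp.two_le
  have hq2 : 2 ≤ q := hq.two_le
  have ha0' : (0 : ℚ) < a := by exact_mod_cast ha0
  have hq0' : (0 : ℚ) ≤ q := by positivity
  have hp2' : (2 : ℚ) ≤ p := by exact_mod_cast hp2
  have hkey : (N : ℚ) * p * q = hh * a * (p + q - 1) := by
    have h' := h
    rw [autPr, ← hh_def, ← ha_def, ← N_def] at h'
    have d1 : (0 : ℚ) < (hh : ℚ) * a := by exact_mod_cast Nat.mul_pos hh0 ha0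
    have d2 : (0 : ℚ) < (p : ℚ) * q := by
      exact_mod_cast Nat.mul_pos hp.pos hq.pos
    rw [div_eq_div_iff (ne_of_gt d1) (ne_of_gt d2)] at h'
    linear_combination h'
  have hled : hh ≤ q * l := by
    have hineq : (p : ℚ) * N ≤ p * a * l + (Tᶜ.card : ℚ) * a := by exact_mod_cast hsum
    have hkc : (T.card : ℚ) + (Tᶜ.card : ℚ) = hh := by exact_mod_cast hTc
    have hTl : (T.card : ℚ) = l := by exact_mod_cast hTcard
    have hcl : (Tᶜ.card : ℚ) = (hh : ℚ) - l := by linarith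
    have h3 : ((hh : ℚ) * (p + q - 1)) * a ≤ ((q : ℚ) * (p * l + ((hh : ℚ) - l))) * a := by
      calc ((hh : ℚ) * (p + q - 1)) * a = (N : ℚ) * p * q := by rw [hkey]; ring
        _ = ((p : ℚ) * N) * q := by ring
        _ ≤ ((p : ℚ) * a * l + (Tᶜ.card : ℚ) * a) * q :=
            mul_le_mul_of_nonneg_right hineq hq0'
        _ = ((q : ℚ) * (p * l + ((hh : ℚ) - l))) * a := by rw [hcl]; ring
    have h5 : (hh : ℚ) * (p + q - 1) ≤ (q : ℚ) * (p * l + ((hh : ℚ) - l)) :=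
      le_of_mul_le_mul_right h3 ha0'
    have h4 : (hh : ℚ) ≤ (q : ℚ) * l := by nlinarith [h5, hp2']
    exact_mod_cast h4
  set m := Nat.card (H ⧸ L) with m_def
  have hhm : hh = m * l := Subgroup.card_eq_card_quotient_mul_card_subgroup L
  have hm_le : m ≤ q := by
    by_contra hc
    push_neg at hc
    have hlt : q * l < m * l := (Nat.mul_lt_mul_right hl0).mpr hc
    rw [hhm] at hled
    exact absurd hled (Nat.not_le.mpr hlt)
  have hm1 : m ≠ 1 := by
    intro h1
    apply hne
    rw [h1, one_mul] at hhm
    have hLtop : L = ⊤ := (Subgroup.card_eq_iff_eq_top (H := L)).mp (by rw [← l_def, ← hh_def, ← hhm])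
    have hHle : H ≤ autFix H := Subgroup.subgroupOf_eq_top.mp hLtop
    exact le_antisymm hHle (fun x hx => hx.1)
  have hm_ge : q ≤ m := by
    have hmdvd : m ∣ hh := ⟨l, hhm⟩
    have hr := Nat.minFac_prime hm1
    have hdvd : m.minFac ∣ hh := (Nat.minFac_dvd m).trans hmdvd
    have hm0 : 0 < m := by
      rcases Nat.eq_zero_or_pos m with h0 | h0
      · rw [h0, zero_mul] at hhm; omega
      · exact h0
    exact le_trans (hqmin _ hr hdvd) (Nat.minFac_le hm0)
  have hmq : Nat.card (H ⧸ L) = q := le_antisymm hm_le hm_ge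
  haveI : Fact q.Prime := ⟨hq⟩
  haveI hcyc : IsCyclic (H ⧸ L) := isCyclic_of_prime_card hmq
  rw [← hmq]
  exact ⟨(zmodCyclicMulEquiv hcyc).symm⟩
end

section
/- Let H be a non-abelian subgroup of even order of a finite group G such that |Aut(G)| is even. If Pr(H, Aut(G)) = 5/8, then the quotient group H / L(H, Aut(G)) is isomorphic to ℤ_2 × ℤ_2. -/
open scoped Classical

variable {G : Type*}

lemma autFix_le_center [Group G] (H : Subgroup G) :
    (autFix H).subgroupOf H ≤ Subgroup.center H := by
  intro x hx
  rw [Subgroup.mem_subgroupOf] at hx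
  obtain ⟨-, hfix⟩ := hx
  rw [Subgroup.mem_center_iff]
  intro g
  ext
  have h := hfix (MulAut.conj (g : G))
  simp only [MulAut.conj_apply] at h
  push_cast
  exact mul_inv_eq_iff_eq_mul.mp h

lemma card_pairs [Group G] [Fintype G] [DecidableEq G] (H : Subgroup G) :
    Nat.card {p : H × MulAut G // p.2 (p.1 : G) = (p.1 : G)} =
      ∑ x : H, Nat.card (MulAction.stabilizer (MulAut G) (x : G)) := by
  rw [Nat.card_congr (Equiv.subtypeProdEquivSigmaSubtype
    (fun (x : H) (α : MulAut G) => α (x : G) = (x : G)))]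
  rw [Nat.card_eq_fintype_card, Fintype.card_sigma]
  refine Finset.sum_congr rfl fun x _ => ?_
  rw [← Nat.card_eq_fintype_card]
  exact Nat.card_congr (Equiv.subtypeEquivRight fun α => by
    rw [MulAction.mem_stabilizer_iff]; rfl)

-- bound for x not fixed-by-all
lemma stab_bound_s12 [Group G] [Fintype G] [DecidableEq G] (x : G)
    (hx : ¬ ∀ α : MulAut G, α x = x) :
    2 * Nat.card (MulAction.stabilizer (MulAut G) x) ≤ Nat.card (MulAut G) := by
  set K := MulAction.stabilizer (MulAut G) x
  have hdvd : Nat.card K ∣ Nat.card (MulAut G) := Subgroup.card_subgroup_dvd_card K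
  have hne : Nat.card K ≠ Nat.card (MulAut G) := by
    intro hc
    have := Subgroup.eq_top_of_card_eq K hc
    apply hx
    intro α
    have : α ∈ K := this ▸ Subgroup.mem_top α
    exact this
  obtain ⟨k, hk⟩ := hdvd
  have hK0 : 0 < Nat.card K := Nat.card_pos
  have hA0 : 0 < Nat.card (MulAut G) := Nat.card_pos
  have hk0 : k ≠ 0 := by rintro rfl; rw [mul_zero] at hk; omega
  have hk1 : k ≠ 1 := by rintro rfl; rw [mul_one] at hk; exact hne hk.symm
  have hk2 : 2 ≤ k := by omega
  calc 2 * Nat.card K ≤ Nat.card K * k := by nlinarith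
    _ = Nat.card (MulAut G) := hk.symm

theorem stmt12 [Group G] [Fintype G] [DecidableEq G] (H : Subgroup G)
    (hna : ¬ IsMulCommutative H) (hH : Even (Nat.card H))
    (hA : Even (Nat.card (MulAut G))) (h : autPr H = 5 / 8) :
    Nonempty ((H ⧸ (autFix H).subgroupOf H)
      ≃* Multiplicative (ZMod 2) × Multiplicative (ZMod 2)) := by
  set L := (autFix H).subgroupOf H with hLdef
  have hcenter : L ≤ Subgroup.center H := autFix_le_center H
  -- the quotient is not cyclic
  have hnotcyc : ¬ IsCyclic (H ⧸ L) := by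
    intro hc
    exact hna ⟨⟨fun a b => commutative_of_cyclic_center_quotient (QuotientGroup.mk' L)
      (by rw [QuotientGroup.ker_mk']; exact hcenter) a b⟩⟩
  have hHpos : 0 < Nat.card H := Nat.card_pos
  have hApos : 0 < Nat.card (MulAut G) := Nat.card_pos
  have hLpos : 0 < Nat.card L := Nat.card_pos
  -- 8 N = 5 |H| |A|
  set N := Nat.card {p : H × MulAut G // p.2 (p.1 : G) = (p.1 : G)} with hNdef
  have key : 8 * N = 5 * (Nat.card H * Nat.card (MulAut G)) := by
    rw [autPr] at h
    have hH0 : (Nat.card H : ℚ) ≠ 0 := Nat.cast_ne_zero.mpr hHpos.ne'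
    have hA0 : (Nat.card (MulAut G) : ℚ) ≠ 0 := Nat.cast_ne_zero.mpr hApos.ne'
    field_simp at h
    have h' : Fintype.card {p : H × MulAut G // p.2 (p.1 : G) = (p.1 : G)} * 8 =
        5 * (Fintype.card H * Fintype.card (MulAut G)) := by
      simp only [Nat.card_eq_fintype_card] at h; exact_mod_cast (by linarith [h] :
        (Fintype.card {p : H × MulAut G // p.2 (p.1 : G) = (p.1 : G)} * 8 : ℚ) =
          5 * (Fintype.card H * Fintype.card (MulAut G)))
    simp only [hNdef, Nat.card_eq_fintype_card]
    omega
  -- bound each stabilizer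
  have hbound : ∀ x : H, 2 * Nat.card (MulAction.stabilizer (MulAut G) (x : G)) ≤
      Nat.card (MulAut G) + (if x ∈ L then Nat.card (MulAut G) else 0) := by
    intro x
    by_cases hx : x ∈ L
    · simp only [hx, if_pos]
      have := Subgroup.card_le_card_group (MulAction.stabilizer (MulAut G) (x : G))
      omega
    · simp only [hx, if_neg, not_false_iff, add_zero]
      apply stab_bound_s12
      intro hall
      exact hx (by rw [hLdef, Subgroup.mem_subgroupOf]; exact ⟨x.2, hall⟩)
  have hsum : 2 * N ≤ Nat.card H * Nat.card (MulAut G) +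
      Nat.card L * Nat.card (MulAut G) := by
    rw [hNdef, card_pairs H, Finset.mul_sum]
    calc ∑ x : H, 2 * Nat.card (MulAction.stabilizer (MulAut G) (x : G))
        ≤ ∑ x : H, (Nat.card (MulAut G) + (if x ∈ L then Nat.card (MulAut G) else 0)) :=
          Finset.sum_le_sum fun x _ => hbound x
      _ = Nat.card H * Nat.card (MulAut G) + Nat.card L * Nat.card (MulAut G) := by
          rw [Finset.sum_add_distrib, Finset.sum_const, Finset.card_univ, smul_eq_mul,
            ← Finset.sum_filter, Finset.sum_const, smul_eq_mul]
          congr 2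
          · exact (Nat.card_eq_fintype_card).symm
          · rw [Nat.card_eq_fintype_card]
            exact (Fintype.card_subtype _).symm
  -- |H| ≤ 4 |L|
  have hle : Nat.card H ≤ 4 * Nat.card L := by
    have : 5 * (Nat.card H * Nat.card (MulAut G)) ≤
        4 * (Nat.card H * Nat.card (MulAut G) + Nat.card L * Nat.card (MulAut G)) := by
      omega
    nlinarith
  -- Lagrange
  have hlag : Nat.card H = Nat.card (H ⧸ L) * Nat.card L :=
    Subgroup.card_eq_card_quotient_mul_card_subgroup L
  have hQle : Nat.card (H ⧸ L) ≤ 4 := by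
    rw [hlag] at hle
    exact Nat.le_of_mul_le_mul_right (by omega) hLpos
  have hQpos : 0 < Nat.card (H ⧸ L) := Nat.card_pos
  -- card of quotient is exactly 4
  have hQ4 : Nat.card (H ⧸ L) = 4 := by
    rcases Nat.lt_or_ge (Nat.card (H ⧸ L)) 4 with hlt | hge
    · exfalso
      interval_cases hq : Nat.card (H ⧸ L)
      · have : Subsingleton (H ⧸ L) := (Nat.card_eq_one_iff_unique.mp hq).1
        exact hnotcyc inferInstance
      · exact hnotcyc (isCyclic_of_prime_card (p := 2) hq)
      · exact hnotcyc (isCyclic_of_prime_card (p := 3) hq)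
    · omega
  -- exponent 2
  have hexp : ∀ g : H ⧸ L, g ^ 2 = 1 := by
    intro g
    have hdvd : orderOf g ∣ 4 := hQ4 ▸ orderOf_dvd_natCard g
    have hne4 : orderOf g ≠ 4 := by
      intro h4
      exact hnotcyc (isCyclic_of_orderOf_eq_card g (by rw [h4, hQ4]))
    have hpos : 0 < orderOf g := by
      have : Finite (H ⧸ L) := Nat.finite_of_card_ne_zero (by omega)
      exact orderOf_pos g
    have hle4 : orderOf g ≤ 4 := Nat.le_of_dvd (by norm_num) hdvd
    interval_cases hd : orderOf g
    · rw [orderOf_eq_one_iff] at hd; simp [hd]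
    · rw [← hd]; exact pow_orderOf_eq_one g
    · norm_num at hdvd
    · exact absurd rfl hne4
  have hexp2 : Monoid.exponent (H ⧸ L) = 2 := by
    have hdvd : Monoid.exponent (H ⧸ L) ∣ 2 :=
      Monoid.exponent_dvd_of_forall_pow_eq_one hexp
    have hne1 : Monoid.exponent (H ⧸ L) ≠ 1 := by
      intro h1
      have hall : ∀ g : H ⧸ L, g = 1 := fun g => by
        have := Monoid.pow_exponent_eq_one g
        rwa [h1, pow_one] at this
      have : Subsingleton (H ⧸ L) := ⟨fun a b => (hall a).trans (hall b).symm⟩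
      exact hnotcyc inferInstance
    rcases (Nat.dvd_prime Nat.prime_two).mp hdvd with h1 | h2
    · exact absurd h1 hne1
    · exact h2
  haveI : IsKleinFour (H ⧸ L) := ⟨hQ4, hexp2⟩
  haveI : IsKleinFour (Multiplicative (ZMod 2) × Multiplicative (ZMod 2)) :=
    ⟨by simp, by simp [Monoid.exponent_prod]⟩
  exact IsKleinFour.nonempty_mulEquiv
end

section
/- Let H be a subgroup of a finite group G, let p be the smallest prime dividing |Aut(G)| and q the smallest prime dividing |H|, and suppose that [Aut(G) : C_{Aut(G)}(x)] = p for every x ∈ H \ L(H, Aut(G)). If H / L(H, Aut(G)) is isomorphic to the cyclic group ℤ_q, then Pr(H, Aut(G)) = (p + q − 1)/(pq). -/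
open scoped Classical

variable {G : Type*}

theorem stmt13 [Group G] [Fintype G] [DecidableEq G] (H : Subgroup G) (p q : ℕ)
    (hp : p.Prime) (hpdvd : p ∣ Nat.card (MulAut G))
    (hpmin : ∀ r : ℕ, r.Prime → r ∣ Nat.card (MulAut G) → p ≤ r)
    (hq : q.Prime) (hqdvd : q ∣ Nat.card H)
    (hqmin : ∀ r : ℕ, r.Prime → r ∣ Nat.card H → q ≤ r)
    (hstab : ∀ x : G, x ∈ H → x ∉ autFix H →
      (MulAction.stabilizer (MulAut G) x).index = p)
    (hquot : Nonempty ((H ⧸ (autFix H).subgroupOf H) ≃* Multiplicative (ZMod q))) :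
    autPr H = ((p : ℚ) + (q : ℚ) - 1) / ((p : ℚ) * (q : ℚ)) := by
  classical
  set L := (autFix H).subgroupOf H with hL
  set n := Nat.card (MulAut G) with hn
  set k := Nat.card L with hk
  set m := Nat.card H with hm
  -- card of the fixed-pair set as a sum over H
  set c : H → ℕ := fun x => Nat.card {α : MulAut G // α (x : G) = (x : G)} with hc
  have hN : Nat.card {p : H × MulAut G // p.2 (p.1 : G) = (p.1 : G)} = ∑ x : H, c x := by
    rw [Nat.card_congr (Equiv.subtypeProdEquivSigmaSubtype
      (fun (x : H) (α : MulAut G) => α (x : G) = (x : G)))]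
    rw [Nat.card_eq_fintype_card, Fintype.card_sigma]
    exact Finset.sum_congr rfl fun x _ => (Nat.card_eq_fintype_card).symm
  -- value of c on fixed elements
  have hcfix : ∀ x : H, (x : G) ∈ autFix H → c x = n := by
    intro x hx
    exact Nat.card_congr (Equiv.subtypeUnivEquiv fun α => hx.2 α)
  -- value of c on non-fixed elements
  have hcnon : ∀ x : H, (x : G) ∉ autFix H → p * c x = n := by
    intro x hx
    have hidx := hstab (x : G) x.2 hx
    have hmul := Subgroup.index_mul_card (MulAction.stabilizer (MulAut G) (x : G))
    have hcx : c x = Nat.card (MulAction.stabilizer (MulAut G) (x : G)) := by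
      refine Nat.card_congr (Equiv.subtypeEquivRight fun α => ?_)
      simp [MulAction.mem_stabilizer_iff, MulAut.smul_def]
    rw [hcx, ← hidx, hmul]
  -- k counts the fixed elements of H
  have hkcard : k = (Finset.univ.filter (fun x : H => (x : G) ∈ autFix H)).card := by
    rw [hk, Nat.card_congr (Equiv.subtypeEquivRight
      (fun x : H => Subgroup.mem_subgroupOf)), Nat.card_eq_fintype_card,
      Fintype.card_subtype]
  -- the key counting identity
  have hkey : p * (∑ x : H, c x) + k * n = k * p * n + m * n := by
    have h1 : p * (∑ x : H, c x) + k * n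
        = ∑ x : H, (p * c x + if (x : G) ∈ autFix H then n else 0) := by
      rw [Finset.sum_add_distrib, ← Finset.mul_sum, hkcard]
      congr 1
      rw [← Finset.sum_filter, Finset.sum_const, smul_eq_mul]
    have h2 : k * p * n + m * n
        = ∑ x : H, ((if (x : G) ∈ autFix H then p * n else 0) + n) := by
      rw [Finset.sum_add_distrib, Finset.sum_const, smul_eq_mul, hkcard,
        ← Finset.sum_filter, Finset.sum_const, smul_eq_mul, hm,
        Nat.card_eq_fintype_card, Fintype.card, mul_assoc]
    rw [h1, h2]
    refine Finset.sum_congr rfl fun x _ => ?_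
    by_cases hx : (x : G) ∈ autFix H
    · simp only [hx, if_true]
      rw [hcfix x hx]
    · simp only [hx, if_false]
      rw [hcnon x hx, add_zero, zero_add]
  -- |H| = q * k
  have hHqk : m = q * k := by
    have h1 : Nat.card (H ⧸ L) = q := by
      rw [Nat.card_congr hquot.some.toEquiv, Nat.card_congr Multiplicative.toAdd,
        Nat.card_zmod]
    rw [hm, Subgroup.card_eq_card_quotient_mul_card_subgroup L, h1, hk]
  -- positivity
  have hppos : 0 < p := hp.pos
  have hqpos : 0 < q := hq.pos
  have hnpos : 0 < n := Nat.card_pos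
  have hkpos : 0 < k := Nat.card_pos
  have hmpos : 0 < m := Nat.card_pos
  -- finish with rational arithmetic
  rw [autPr, hN]
  have hkeyQ : (p : ℚ) * (∑ x : H, c x) + k * n = k * p * n + m * n := by
    exact_mod_cast congrArg (fun t : ℕ => (t : ℚ)) hkey
  have hHqkQ : (m : ℚ) = q * k := by exact_mod_cast hHqk
  have hne : ((m : ℚ) * n) ≠ 0 := by positivity
  rw [← hm, ← hn, div_eq_div_iff hne (by positivity)]
  linear_combination (q : ℚ) * hkeyQ + ((n : ℚ) - (p : ℚ) * n) * hHqkQ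
end

section
/- Let H be a subgroup of a finite group G, let p be the smallest prime dividing |Aut(G)| and q the smallest prime dividing |H|, and suppose that [Aut(G) : C_{Aut(G)}(x)] = p for every x ∈ H \ L(H, Aut(G)). If H / L(H, Aut(G)) is isomorphic to ℤ_q × ℤ_q, then Pr(H, Aut(G)) = (q² + p − 1)/(pq²). -/
open scoped Classical

variable {G : Type*}

theorem stmt14 [Group G] [Fintype G] [DecidableEq G] (H : Subgroup G) (p q : ℕ)
    (hp : p.Prime) (hpdvd : p ∣ Nat.card (MulAut G))
    (hpmin : ∀ r : ℕ, r.Prime → r ∣ Nat.card (MulAut G) → p ≤ r)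
    (hq : q.Prime) (hqdvd : q ∣ Nat.card H)
    (hqmin : ∀ r : ℕ, r.Prime → r ∣ Nat.card H → q ≤ r)
    (hstab : ∀ x : G, x ∈ H → x ∉ autFix H →
      (MulAction.stabilizer (MulAut G) x).index = p)
    (hquot : Nonempty ((H ⧸ (autFix H).subgroupOf H)
      ≃* Multiplicative (ZMod q) × Multiplicative (ZMod q))) :
    autPr H = ((q : ℚ) ^ 2 + (p : ℚ) - 1) / ((p : ℚ) * (q : ℚ) ^ 2) := by
  classical
  set L := (autFix H).subgroupOf H with hLdef
  obtain ⟨e⟩ := hquot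
  haveI : NeZero q := ⟨hq.pos.ne'⟩
  have hqq : Nat.card (H ⧸ L) = q ^ 2 := by
    rw [Nat.card_congr e.toEquiv, Nat.card_prod]
    simp [Nat.card_eq_fintype_card, ZMod.card, sq]
  have hHL : Nat.card H = q ^ 2 * Nat.card L := by
    rw [Subgroup.card_eq_card_quotient_mul_card_subgroup L, hqq]
  have hA0 : 0 < Nat.card (MulAut G) := Nat.card_pos
  have hL0 : 0 < Nat.card L := Nat.card_pos
  obtain ⟨c, hc⟩ := hpdvd
  have hc0 : 0 < c := by
    rcases Nat.eq_zero_or_pos c with h | h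
    · subst h; simp only [Nat.mul_zero] at hc; omega
    · exact h
  have hfix_card : ∀ x : H, (x : G) ∈ autFix H →
      Nat.card (MulAction.stabilizer (MulAut G) (x : G)) = Nat.card (MulAut G) := by
    intro x hx
    have htop : MulAction.stabilizer (MulAut G) (x : G) = ⊤ := by
      ext α
      simp [MulAction.mem_stabilizer_iff, MulAut.smul_def, hx.2 α]
    rw [htop]
    exact Nat.card_congr Subgroup.topEquiv.toEquiv
  have hnon_card : ∀ x : H, (x : G) ∉ autFix H →
      Nat.card (MulAction.stabilizer (MulAut G) (x : G)) = c := by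
    intro x hx
    have h1 := Subgroup.index_mul_card (MulAction.stabilizer (MulAut G) (x : G))
    rw [hstab x x.2 hx, hc] at h1
    exact Nat.eq_of_mul_eq_mul_left hp.pos h1
  have hsum : Nat.card {pa : H × MulAut G // pa.2 (pa.1 : G) = (pa.1 : G)}
      = ∑ x : H, Nat.card (MulAction.stabilizer (MulAut G) (x : G)) := by
    rw [Nat.card_eq_fintype_card]
    rw [Fintype.card_congr (Equiv.subtypeProdEquivSigmaSubtype
      (fun (x : H) (α : MulAut G) => α (x : G) = (x : G)))]
    rw [Fintype.card_sigma]
    refine Finset.sum_congr rfl fun x _ => ?_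
    rw [← Nat.card_eq_fintype_card]
    exact Nat.card_congr (Equiv.subtypeEquivRight fun α => by
      simp [MulAction.mem_stabilizer_iff, MulAut.smul_def])
  have hfiltL : (Finset.univ.filter (fun x : H => (x : G) ∈ autFix H)).card
      = Nat.card L := by
    rw [Nat.card_eq_fintype_card, Fintype.card_subtype]
    refine congrArg Finset.card (Finset.filter_congr fun x _ => ?_)
    simp [hLdef, Subgroup.mem_subgroupOf]
  have hfiltL' : (Finset.univ.filter (fun x : H => ¬ (x : G) ∈ autFix H)).card
      = Nat.card H - Nat.card L := by
    rw [Finset.filter_not, Finset.card_sdiff_of_subset (Finset.filter_subset _ _), hfiltL]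
    simp [Nat.card_eq_fintype_card]
  have hsplit : ∑ x : H, Nat.card (MulAction.stabilizer (MulAut G) (x : G))
      = Nat.card L * Nat.card (MulAut G) + (Nat.card H - Nat.card L) * c := by
    rw [← Finset.sum_filter_add_sum_filter_not Finset.univ
      (fun x : H => (x : G) ∈ autFix H)]
    congr 1
    · rw [Finset.sum_congr rfl fun x hx => hfix_card x (Finset.mem_filter.mp hx).2,
        Finset.sum_const, smul_eq_mul, hfiltL]
    · rw [Finset.sum_congr rfl fun x hx => hnon_card x (Finset.mem_filter.mp hx).2,
        Finset.sum_const, smul_eq_mul, hfiltL']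
  have hle : Nat.card L ≤ Nat.card H := by
    rw [hHL]
    exact Nat.le_mul_of_pos_left _ (pow_pos hq.pos 2)
  unfold autPr
  rw [hsum, hsplit]
  have hq0 : (q : ℚ) ≠ 0 := Nat.cast_ne_zero.mpr hq.pos.ne'
  have hp0 : (p : ℚ) ≠ 0 := Nat.cast_ne_zero.mpr hp.pos.ne'
  have hL0' : (Nat.card L : ℚ) ≠ 0 := Nat.cast_ne_zero.mpr hL0.ne'
  have hc0' : (c : ℚ) ≠ 0 := Nat.cast_ne_zero.mpr hc0.ne'
  have hcQ : (Nat.card (MulAut G) : ℚ) = p * c := by exact_mod_cast congrArg Nat.cast hc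
  have hHLQ : (Nat.card H : ℚ) = q ^ 2 * Nat.card L := by exact_mod_cast congrArg Nat.cast hHL
  push_cast [Nat.cast_sub hle]
  rw [hcQ, hHLQ]
  field_simp
  ring
end

section
/- Let H be a subgroup of a finite group G. Then Pr(H, Aut(G)) ≤ Pr(H, G), where Pr(H, G) = |{(x, y) ∈ H × G : xy = yx}| / (|H|·|G|). -/
open scoped Classical

variable {G : Type*}

open MulAction in
lemma key [Group G] [Fintype G] [DecidableEq G] (x : G) :
    Fintype.card {α : MulAut G // α x = x} * Fintype.card G ≤
      Fintype.card {y : G // x * y = y * x} * Fintype.card (MulAut G) := by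
  have e1 : Fintype.card {α : MulAut G // α x = x} =
      Fintype.card (stabilizer (MulAut G) x) := by
    apply Fintype.card_congr
    exact Equiv.subtypeEquivRight fun α => by
      simp [mem_stabilizer_iff, MulAut.smul_def]
  have e2 : Fintype.card {y : G // x * y = y * x} =
      Fintype.card (stabilizer (ConjAct G) x) := by
    apply Fintype.card_congr
    refine ConjAct.toConjAct.toEquiv.subtypeEquiv fun y => ?_
    simp only [mem_stabilizer_iff, ConjAct.smul_def, ConjAct.ofConjAct_toConjAct,
      MulEquiv.toEquiv_eq_coe, EquivLike.coe_coe]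
    constructor
    · intro h; rw [mul_inv_eq_iff_eq_mul]; exact h.symm
    · intro h; exact (mul_inv_eq_iff_eq_mul.mp h).symm
  have hsub : orbit (ConjAct G) x ⊆ orbit (MulAut G) x := by
    rintro y ⟨c, rfl⟩
    exact ⟨MulAut.conj (ConjAct.ofConjAct c), rfl⟩
  have hcard : Fintype.card (orbit (ConjAct G) x) ≤ Fintype.card (orbit (MulAut G) x) :=
    Set.card_le_card hsub
  have os1 := card_orbit_mul_card_stabilizer_eq_card_group (MulAut G) x
  have os2 := card_orbit_mul_card_stabilizer_eq_card_group (ConjAct G) x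
  have hg : Fintype.card (ConjAct G) = Fintype.card G := rfl
  calc Fintype.card {α : MulAut G // α x = x} * Fintype.card G
      = Fintype.card (stabilizer (MulAut G) x) *
        (Fintype.card (orbit (ConjAct G) x) * Fintype.card (stabilizer (ConjAct G) x)) := by
        rw [e1, os2, hg]
    _ ≤ Fintype.card (stabilizer (MulAut G) x) *
        (Fintype.card (orbit (MulAut G) x) * Fintype.card (stabilizer (ConjAct G) x)) :=
        Nat.mul_le_mul_left _ (Nat.mul_le_mul_right _ hcard)
    _ = Fintype.card {y : G // x * y = y * x} * Fintype.card (MulAut G) := by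
        rw [e2, ← os1]; ring

open MulAction in
theorem stmt15 [Group G] [Fintype G] [DecidableEq G] (H : Subgroup G) :
    autPr H ≤
      (Nat.card {p : H × G // (p.1 : G) * p.2 = p.2 * (p.1 : G)} : ℚ) /
        ((Nat.card H : ℚ) * (Nat.card G : ℚ)) := by
  have hnat : Nat.card {p : H × MulAut G // p.2 (p.1 : G) = (p.1 : G)} * Nat.card G ≤
      Nat.card {p : H × G // (p.1 : G) * p.2 = p.2 * (p.1 : G)} * Nat.card (MulAut G) := by
    simp only [Nat.card_eq_fintype_card]
    have e1 : Fintype.card {p : H × MulAut G // p.2 (p.1 : G) = (p.1 : G)} =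
        ∑ x : H, Fintype.card {α : MulAut G // α (x : G) = (x : G)} := by
      rw [Fintype.card_congr
        (Equiv.subtypeProdEquivSigmaSubtype fun (x : H) (α : MulAut G) => α (x : G) = (x : G))]
      rw [Fintype.card_sigma]
    have e2 : Fintype.card {p : H × G // (p.1 : G) * p.2 = p.2 * (p.1 : G)} =
        ∑ x : H, Fintype.card {y : G // (x : G) * y = y * (x : G)} := by
      rw [Fintype.card_congr
        (Equiv.subtypeProdEquivSigmaSubtype fun (x : H) (y : G) => (x : G) * y = y * (x : G))]
      rw [Fintype.card_sigma]
    rw [e1, e2, Finset.sum_mul, Finset.sum_mul]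
    exact Finset.sum_le_sum fun x _ => key (x : G)
  have hH : (0 : ℚ) < Nat.card H := by exact_mod_cast Nat.card_pos
  have hG : (0 : ℚ) < Nat.card G := by exact_mod_cast Nat.card_pos
  have hA : (0 : ℚ) < Nat.card (MulAut G) := by exact_mod_cast Nat.card_pos
  rw [autPr, div_le_div_iff₀ (by positivity) (by positivity)]
  have h : (Nat.card {p : H × MulAut G // p.2 (p.1 : G) = (p.1 : G)} : ℚ) * Nat.card G ≤
      (Nat.card {p : H × G // (p.1 : G) * p.2 = p.2 * (p.1 : G)} : ℚ) * Nat.card (MulAut G) := by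
    exact_mod_cast hnat
  nlinarith [h, hH]
end

section
/- Let H be a subgroup of a finite group G and p the smallest prime dividing |Aut(G)|. Then Pr(H, Aut(G)) ≥ |L(H, Aut(G))|/|H| + (p·(|H| − |X_H| − |L(H, Aut(G))|) + |X_H|)/(|H|·|Aut(G)|), where X_H = {x ∈ H : C_{Aut(G)}(x) = {id}}. -/
open scoped Classical

variable {G : Type*}

/-- The stabilizer of `x` in `Aut(G)` as a subgroup. -/
def autStab [Group G] (x : G) : Subgroup (MulAut G) where
  carrier := {α | α x = x}
  one_mem' := rfl
  mul_mem' := fun {a b} ha hb => by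
    show a (b x) = x
    rw [hb, ha]
  inv_mem' := fun {a} ha => by
    show a⁻¹ x = x
    conv_lhs => rw [← ha]
    exact MulAut.inv_apply_self G a x

theorem stmt16 [Group G] [Fintype G] [DecidableEq G] (H : Subgroup G)
    (p : ℕ) (hp : p.Prime) (hpdvd : p ∣ Nat.card (MulAut G))
    (hpmin : ∀ r : ℕ, r.Prime → r ∣ Nat.card (MulAut G) → p ≤ r) :
    autPr H ≥
      (Nat.card (autFix H) : ℚ) / (Nat.card H : ℚ)
        + ((p : ℚ) * ((Nat.card H : ℚ) - (Nat.card (autX H) : ℚ)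
              - (Nat.card (autFix H) : ℚ)) + (Nat.card (autX H) : ℚ))
          / ((Nat.card H : ℚ) * (Nat.card (MulAut G) : ℚ)) := by
  classical
  have hApos : 0 < Nat.card (MulAut G) := Nat.card_pos
  have hA2 : 2 ≤ Nat.card (MulAut G) := le_trans hp.two_le (Nat.le_of_dvd hApos hpdvd)
  set f : H → ℕ := fun x => Fintype.card {α : MulAut G // α (x : G) = x} with hf
  -- total count as a sum
  have key : Nat.card {q : H × MulAut G // q.2 (q.1 : G) = (q.1 : G)} = ∑ x : H, f x := by
    rw [Nat.card_eq_fintype_card,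
      Fintype.card_congr (Equiv.subtypeProdEquivSigmaSubtype
        (fun (x : H) (α : MulAut G) => α (x : G) = x)), Fintype.card_sigma]
  -- per-element values/bounds
  have hLcard : ∀ x : H, (x : G) ∈ autFix H → f x = Nat.card (MulAut G) := by
    intro x hx
    rw [hf, Nat.card_eq_fintype_card]
    exact Fintype.card_congr (Equiv.subtypeUnivEquiv hx.2)
  have hXcard : ∀ x : H, x ∈ autX H → f x = 1 := by
    intro x hx
    rw [hf, Fintype.card_eq_one_iff]
    exact ⟨⟨1, rfl⟩, fun β => Subtype.ext (hx β.1 β.2)⟩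
  have hRcard : ∀ x : H, x ∉ autX H → p ≤ f x := by
    intro x hx
    have hn : f x = Nat.card (autStab (x : G)) := by
      rw [hf, Nat.card_eq_fintype_card]
      exact Fintype.card_congr (Equiv.subtypeEquivRight fun _ => Iff.rfl)
    have hdvd : f x ∣ Nat.card (MulAut G) :=
      hn ▸ Subgroup.card_subgroup_dvd_card (autStab (x : G))
    have h1 : 1 < f x := by
      rw [autX, Set.mem_setOf_eq] at hx; push_neg at hx
      obtain ⟨α, hα, hne⟩ := hx
      exact Fintype.one_lt_card_iff.mpr ⟨⟨α, hα⟩, ⟨1, rfl⟩, by simpa [Subtype.ext_iff] using hne⟩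
    exact (hpmin (f x).minFac (Nat.minFac_prime (by omega))
      ((Nat.minFac_dvd _).trans hdvd)).trans (Nat.minFac_le (by omega))
  -- disjointness of L and X
  have hdisj : ∀ x : H, (x : G) ∈ autFix H → x ∉ autX H := by
    intro x hx hX
    have : Nontrivial (MulAut G) := Finite.one_lt_card_iff_nontrivial.mp hA2
    obtain ⟨α, hα⟩ := exists_ne (1 : MulAut G)
    exact hα (hX α (hx.2 α))
  -- the three finsets
  set sL : Finset H := Finset.univ.filter (fun x : H => (x : G) ∈ autFix H) with hsL
  set sX : Finset H := Finset.univ.filter (fun x : H => x ∈ autX H) with hsX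
  set sR : Finset H :=
    Finset.univ.filter (fun x : H => ¬((x : G) ∈ autFix H) ∧ ¬(x ∈ autX H)) with hsR
  have e1 : (Finset.univ.filter (fun x : H => ¬((x : G) ∈ autFix H))).filter
      (fun x => x ∈ autX H) = sX := by
    rw [hsX, Finset.filter_filter]
    ext x
    simp only [Finset.mem_filter, Finset.mem_univ, true_and]
    exact ⟨fun h => h.2, fun h => ⟨fun hP => hdisj x hP h, h⟩⟩
  have e2 : (Finset.univ.filter (fun x : H => ¬((x : G) ∈ autFix H))).filter
      (fun x => ¬(x ∈ autX H)) = sR := by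
    rw [hsR, Finset.filter_filter]
  have hdecomp : ∀ g : H → ℕ,
      ∑ x : H, g x = ∑ x ∈ sL, g x + ∑ x ∈ sX, g x + ∑ x ∈ sR, g x := by
    intro g
    have h1 := Finset.sum_filter_add_sum_filter_not Finset.univ
      (fun x : H => (x : G) ∈ autFix H) g
    have h2 := Finset.sum_filter_add_sum_filter_not
      (Finset.univ.filter (fun x : H => ¬((x : G) ∈ autFix H)))
      (fun x : H => x ∈ autX H) g
    rw [e1, e2] at h2
    rw [← h1, ← h2, ← hsL, add_assoc]
  -- cardinalities
  have hlcard : Nat.card (autFix H) = sL.card := by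
    rw [Nat.card_eq_fintype_card, hsL, ← Fintype.card_subtype]
    exact Fintype.card_congr
      ⟨fun y => ⟨⟨y.1, y.2.1⟩, y.2⟩, fun z => ⟨z.1.1, z.2⟩, fun _ => rfl, fun _ => rfl⟩
  have hxcard : Nat.card (autX H) = sX.card := by
    rw [Nat.card_eq_fintype_card, hsX, ← Fintype.card_subtype]
  have hcardH : Nat.card H = sL.card + sX.card + sR.card := by
    rw [Nat.card_eq_fintype_card, ← Finset.card_univ, Finset.card_eq_sum_ones,
      hdecomp (fun _ => 1), Finset.card_eq_sum_ones sL, Finset.card_eq_sum_ones sX,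
      Finset.card_eq_sum_ones sR]
  -- the main counting bound
  have hbound : sL.card * Nat.card (MulAut G) + sX.card + sR.card * p
      ≤ Nat.card {q : H × MulAut G // q.2 (q.1 : G) = (q.1 : G)} := by
    rw [key, hdecomp f]
    gcongr
    · rw [Finset.sum_congr rfl (fun x hx => hLcard x (Finset.mem_filter.mp hx).2),
        Finset.sum_const, smul_eq_mul]
    · rw [Finset.sum_congr rfl (fun x hx => hXcard x (Finset.mem_filter.mp hx).2),
        Finset.sum_const, smul_eq_mul, mul_one]
    · calc sR.card * p = ∑ _x ∈ sR, p := by rw [Finset.sum_const, smul_eq_mul]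
        _ ≤ ∑ x ∈ sR, f x :=
          Finset.sum_le_sum (fun x hx => hRcard x (Finset.mem_filter.mp hx).2.2)
  -- final algebra
  have hHpos : (0 : ℚ) < (Nat.card H : ℚ) := by exact_mod_cast (Nat.card_pos : 0 < Nat.card H)
  have hAq : (0 : ℚ) < (Nat.card (MulAut G) : ℚ) := by exact_mod_cast hApos
  rw [ge_iff_le, autPr]
  have hr : (Nat.card H : ℚ) - (Nat.card (autX H) : ℚ) - (Nat.card (autFix H) : ℚ)
      = (sR.card : ℚ) := by
    rw [hlcard, hxcard]
    have : (Nat.card H : ℚ) = sL.card + sX.card + sR.card := by exact_mod_cast hcardH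
    rw [this]; ring
  rw [hr, hlcard, hxcard]
  rw [show (sL.card : ℚ) / (Nat.card H : ℚ)
      = ((sL.card : ℚ) * (Nat.card (MulAut G) : ℚ)) /
        ((Nat.card H : ℚ) * (Nat.card (MulAut G) : ℚ)) from
    (mul_div_mul_right _ _ hAq.ne').symm, ← add_div]
  gcongr
  have hb' : ((sL.card * Nat.card (MulAut G) + sX.card + sR.card * p : ℕ) : ℚ)
      ≤ (Nat.card {q : H × MulAut G // q.2 (q.1 : G) = (q.1 : G)} : ℚ) := by
    exact_mod_cast hbound
  push_cast at hb'
  linarith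
end

section
/- Let H be a subgroup of a finite group G. Then Pr(H, Aut(G)) ≥ (1/|S(H, Aut(G))|)·(1 + (|S(H, Aut(G))| − 1)/[H : L(H, Aut(G))]), and equality holds if and only if orb(x) = x·S(H, Aut(G)) for every x ∈ H \ L(H, Aut(G)). -/
open scoped Classical

variable {G : Type*}

set_option linter.unusedSectionVars false

section aux
variable [Group G] [Fintype G] [DecidableEq G] (H : Subgroup G)

lemma mem_autFix_iff {x : G} : x ∈ autFix H ↔ x ∈ H ∧ ∀ α : MulAut G, α x = x := Iff.rfl

lemma autFix_le : autFix H ≤ H := fun _ hx => hx.1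

lemma one_mem_autS : (1 : G) ∈ autS H := ⟨1, H.one_mem, 1, by simp⟩

lemma orbit_subset_img {x : G} (hx : x ∈ H) :
    MulAction.orbit (MulAut G) x ⊆ (fun s => x * s) '' autS H := by
  rintro y ⟨α, rfl⟩
  exact ⟨x⁻¹ * α x, ⟨x, hx, α, rfl⟩, by simp [MulAut.smul_def]⟩

lemma card_img (x : G) : Nat.card ((fun s => x * s) '' autS H) = Nat.card (autS H) :=
  Nat.card_image_of_injective (mul_right_injective x) _

lemma orbit_mul_stab (x : G) :
    Nat.card (MulAction.orbit (MulAut G) x) * Nat.card (MulAction.stabilizer (MulAut G) x) =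
      Nat.card (MulAut G) := by
  rw [← Nat.card_prod]
  exact Nat.card_congr (MulAction.orbitProdStabilizerEquivGroup (MulAut G) x)

lemma orbit_card_le {x : G} (hx : x ∈ H) :
    Nat.card (MulAction.orbit (MulAut G) x) ≤ Nat.card (autS H) := by
  rw [← card_img H x]
  exact Nat.card_mono (Set.toFinite _) (orbit_subset_img H hx)

lemma stab_pos (x : G) : 0 < Nat.card (MulAction.stabilizer (MulAut G) x) :=
  Nat.card_pos

lemma stab_mul_S_ge {x : G} (hx : x ∈ H) :
    Nat.card (MulAut G) ≤
      Nat.card (MulAction.stabilizer (MulAut G) x) * Nat.card (autS H) := by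
  calc Nat.card (MulAut G)
      = Nat.card (MulAction.orbit (MulAut G) x) *
          Nat.card (MulAction.stabilizer (MulAut G) x) := (orbit_mul_stab x).symm
    _ ≤ Nat.card (autS H) * Nat.card (MulAction.stabilizer (MulAut G) x) :=
        Nat.mul_le_mul_right _ (orbit_card_le H hx)
    _ = _ := mul_comm _ _

lemma stab_mul_S_eq_iff {x : G} (hx : x ∈ H) :
    Nat.card (MulAction.stabilizer (MulAut G) x) * Nat.card (autS H) = Nat.card (MulAut G) ↔
      MulAction.orbit (MulAut G) x = (fun s => x * s) '' autS H := by
  constructor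
  · intro h
    have hcard : Nat.card (MulAction.orbit (MulAut G) x) = Nat.card (autS H) := by
      have := orbit_mul_stab (G := G) x
      have hs := stab_pos (G := G) x
      nlinarith [this, h]
    refine Set.eq_of_subset_of_ncard_le (orbit_subset_img H hx) ?_ (Set.toFinite _)
    rw [← Nat.card_coe_set_eq, ← Nat.card_coe_set_eq, card_img, hcard]
  · intro h
    have hcard : Nat.card (MulAction.orbit (MulAut G) x) = Nat.card (autS H) := by
      rw [h, card_img]
    rw [← orbit_mul_stab (G := G) x, hcard, mul_comm]

end aux

theorem stmt17 [Group G] [Fintype G] [DecidableEq G] (H : Subgroup G) :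
    autPr H ≥
      (1 / (Nat.card (autS H) : ℚ)) *
        (1 + ((Nat.card (autS H) : ℚ) - 1) / ((autFix H).relIndex H : ℚ))
    ∧ (autPr H =
        (1 / (Nat.card (autS H) : ℚ)) *
          (1 + ((Nat.card (autS H) : ℚ) - 1) / ((autFix H).relIndex H : ℚ))
      ↔ ∀ x ∈ H, x ∉ autFix H →
          MulAction.orbit (MulAut G) x = (fun s => x * s) '' autS H) := by
  classical
  set a := Nat.card (MulAut G) with ha_def
  set s := Nat.card (autS H) with hs_def
  set l := Nat.card (autFix H) with hl_def
  set h := Nat.card H with hh_def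
  set n := Nat.card {p : H × MulAut G // p.2 (p.1 : G) = (p.1 : G)} with hn_def
  set r := (autFix H).relIndex H with hr_def
  -- positivity
  have hApos : 0 < a := Nat.card_pos
  have hHpos : 0 < h := Nat.card_pos
  have hLpos : 0 < l := Nat.card_pos
  have hSpos : 0 < s := by
    rw [hs_def]
    exact @Nat.card_pos _ ⟨⟨1, one_mem_autS H⟩⟩ _
  have hle : l ≤ h := Subgroup.card_le_of_le (autFix_le H)
  have hrl : r * l = h := by
    have h1 : Nat.card ((autFix H).subgroupOf H) = l :=
      Nat.card_congr (Subgroup.subgroupOfEquivOfLe (autFix_le H)).toEquiv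
    have h2 := Subgroup.card_mul_index ((autFix H).subgroupOf H)
    rw [h1] at h2
    rw [hr_def, Subgroup.relIndex, mul_comm]
    exact h2
  have hRpos : 0 < r := by
    rcases Nat.eq_zero_or_pos r with h0 | h0
    · rw [h0, zero_mul] at hrl; omega
    · exact h0
  -- counting: n = sum of stabilizer cards
  have e : {p : H × MulAut G // p.2 (p.1 : G) = (p.1 : G)} ≃
      Σ x : H, MulAction.stabilizer (MulAut G) (x : G) :=
    { toFun := fun p => ⟨p.1.1, p.1.2, p.2⟩
      invFun := fun q => ⟨(q.1, q.2.1), q.2.2⟩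
      left_inv := fun p => rfl
      right_inv := fun q => rfl }
  have hn : n = ∑ x : H, Nat.card (MulAction.stabilizer (MulAut G) (x : G)) := by
    rw [hn_def, Nat.card_congr e, Nat.card_eq_fintype_card, Fintype.card_sigma]
    simp [Nat.card_eq_fintype_card]
  -- split the sum
  set P : H → Prop := fun x => (x : G) ∈ autFix H with hP_def
  have hfix_term : ∀ x : H, P x → Nat.card (MulAction.stabilizer (MulAut G) (x : G)) = a := by
    intro x hx
    have : MulAction.stabilizer (MulAut G) (x : G) = ⊤ := by
      ext α
      simp [MulAction.mem_stabilizer_iff, MulAut.smul_def, hx.2 α]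
    rw [this]
    exact Subgroup.card_top
  have hfilcard : (Finset.univ.filter P).card = l := by
    have e' : {x : H // P x} ≃ (autFix H) :=
      { toFun := fun x => ⟨x.1, x.2⟩
        invFun := fun y => ⟨⟨y.1, y.2.1⟩, y.2⟩
        left_inv := fun _ => rfl
        right_inv := fun _ => rfl }
    rw [← Fintype.card_subtype, hl_def, Nat.card_eq_fintype_card]
    exact Fintype.card_congr e'
  have hfilnotcard : (Finset.univ.filter (fun x => ¬ P x)).card = h - l := by
    have := Finset.card_filter_add_card_filter_not (s := Finset.univ) (p := P)
    rw [hfilcard, Finset.card_univ] at this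
    rw [hh_def, Nat.card_eq_fintype_card]
    omega
  have hsplit : n = l * a + ∑ x ∈ Finset.univ.filter (fun x => ¬ P x),
      Nat.card (MulAction.stabilizer (MulAut G) (x : G)) := by
    rw [hn, ← Finset.sum_filter_add_sum_filter_not Finset.univ P]
    congr 1
    rw [Finset.sum_congr rfl (fun x hx => hfix_term x (Finset.mem_filter.mp hx).2),
      Finset.sum_const, hfilcard, smul_eq_mul]
  -- key nat inequality and equality characterization
  have hterm_le : ∀ x ∈ Finset.univ.filter (fun x : H => ¬ P x),
      a ≤ Nat.card (MulAction.stabilizer (MulAut G) (x : G)) * s := by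
    intro x _
    exact stab_mul_S_ge H x.2
  have hns : n * s = l * a * s + ∑ x ∈ Finset.univ.filter (fun x : H => ¬ P x),
      Nat.card (MulAction.stabilizer (MulAut G) (x : G)) * s := by
    rw [hsplit, add_mul, Finset.sum_mul]
  have hnat_ge : l * a * s + (h - l) * a ≤ n * s := by
    rw [hns]
    gcongr
    calc (h - l) * a = ∑ _x ∈ Finset.univ.filter (fun x : H => ¬ P x), a := by
          rw [Finset.sum_const, hfilnotcard, smul_eq_mul]
      _ ≤ _ := Finset.sum_le_sum hterm_le
  have hnat_eq_iff : n * s = l * a * s + (h - l) * a ↔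
      ∀ x ∈ H, x ∉ autFix H →
        MulAction.orbit (MulAut G) x = (fun s => x * s) '' autS H := by
    rw [hns]
    have hsum : (h - l) * a = ∑ _x ∈ Finset.univ.filter (fun x : H => ¬ P x), a := by
      rw [Finset.sum_const, hfilnotcard, smul_eq_mul]
    rw [add_right_inj, hsum, eq_comm, Finset.sum_eq_sum_iff_of_le hterm_le]
    constructor
    · intro hall x hxH hxF
      have hmem : (⟨x, hxH⟩ : H) ∈ Finset.univ.filter (fun x : H => ¬ P x) := by
        simp only [Finset.mem_filter, Finset.mem_univ, true_and, hP_def]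
        exact hxF
      exact (stab_mul_S_eq_iff H hxH).mp (hall _ hmem).symm
    · intro hall x hx
      have hxF : ¬ P x := (Finset.mem_filter.mp hx).2
      exact ((stab_mul_S_eq_iff H x.2).mpr (hall x x.2 hxF)).symm
  -- rational bookkeeping
  have hPr : autPr H = (n : ℚ) / ((h : ℚ) * (a : ℚ)) := rfl
  have hs0 : (s : ℚ) ≠ 0 := Nat.cast_ne_zero.mpr hSpos.ne'
  have hr0 : (r : ℚ) ≠ 0 := Nat.cast_ne_zero.mpr hRpos.ne'
  have hh0 : (h : ℚ) ≠ 0 := Nat.cast_ne_zero.mpr hHpos.ne'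
  have ha0 : (a : ℚ) ≠ 0 := Nat.cast_ne_zero.mpr hApos.ne'
  have hrlQ : ((r : ℚ) * l) = (h : ℚ) := by exact_mod_cast congrArg (Nat.cast : ℕ → ℚ) hrl
  have hRHS : 1 / (s : ℚ) * (1 + ((s : ℚ) - 1) / (r : ℚ)) =
      ((l * a * s + (h - l) * a : ℕ) : ℚ) / ((s : ℚ) * ((h : ℚ) * (a : ℚ))) := by
    push_cast [Nat.cast_sub hle]
    rw [← hrlQ]
    field_simp
    ring
  constructor
  · rw [hPr, hRHS, ge_iff_le, div_le_div_iff₀ (by positivity) (by positivity)]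
    have hc : ((l * a * s + (h - l) * a : ℕ) : ℚ) ≤ (n : ℚ) * (s : ℚ) := by
      exact_mod_cast hnat_ge
    nlinarith [hc, show (0 : ℚ) ≤ (h : ℚ) * (a : ℚ) by positivity]
  · rw [hPr, hRHS, div_eq_div_iff (by positivity) (by positivity),
      show (n : ℚ) * ((s : ℚ) * ((h : ℚ) * (a : ℚ))) = ((n : ℚ) * (s : ℚ)) * ((h : ℚ) * (a : ℚ)) by ring,
      mul_left_inj' (by positivity), ← Nat.cast_mul, Nat.cast_inj]
    exact hnat_eq_iff
end

section
/- Let H be a subgroup of a finite group G. Then Pr(H, Aut(G)) ≥ (1/|[H, Aut(G)]|)·(1 + (|[H, Aut(G)]| − 1)/[H : L(H, Aut(G))]). -/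
open scoped Classical

variable {G : Type*}

theorem stmt18 [Group G] [Fintype G] [DecidableEq G] (H : Subgroup G) :
    autPr H ≥
      (1 / (Nat.card (Subgroup.closure (autS H)) : ℚ)) *
        (1 + ((Nat.card (Subgroup.closure (autS H)) : ℚ) - 1)
          / ((autFix H).relIndex H : ℚ)) := by
  classical
  set Kgrp := Subgroup.closure (autS H) with hKgrp
  set K := Nat.card Kgrp with hK
  set A := Nat.card (MulAut G) with hA
  set h := Nat.card H with hh
  set L := Nat.card ((autFix H).subgroupOf H) with hL
  set r := (autFix H).relIndex H with hr
  have hrL : r * L = h := Subgroup.index_mul_card _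
  -- the count as a sum of stabilizer sizes
  have hcount : Nat.card {p : H × MulAut G // p.2 (p.1 : G) = (p.1 : G)} =
      ∑ x : H, Nat.card (MulAction.stabilizer (MulAut G) (x : G)) := by
    rw [Nat.card_eq_fintype_card, Fintype.card_congr
      (Equiv.subtypeProdEquivSigmaSubtype fun (x : H) (α : MulAut G) => α (x : G) = (x : G)),
      Fintype.card_sigma]
    refine Finset.sum_congr rfl fun x _ => ?_
    rw [Nat.card_eq_fintype_card]
    exact (Fintype.card_congr (Equiv.subtypeEquivRight fun α => by
      simp [MulAction.mem_stabilizer_iff, MulAut.smul_def, eq_comm])).symm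
  -- per-element lower bound on stabilizer size
  have hstab : ∀ x : H, A ≤ Nat.card (MulAction.stabilizer (MulAut G) (x : G)) * K := by
    intro x
    have horb : Nat.card (MulAction.orbit (MulAut G) (x : G)) ≤ K := by
      have : Function.Injective (fun g : MulAction.orbit (MulAut G) (x : G) =>
          (⟨(x : G)⁻¹ * g, by
            obtain ⟨α, hα⟩ := g.2
            simp only [← hα, MulAut.smul_def]
            exact autcomm_mem_closure H x α⟩ : Kgrp)) := by
        intro a b hab
        simp only [Subtype.mk.injEq, mul_right_inj] at hab
        exact Subtype.ext hab
      exact Nat.card_le_card_of_injective _ this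
    calc A = Nat.card (MulAction.orbit (MulAut G) (x : G)) *
          Nat.card (MulAction.stabilizer (MulAut G) (x : G)) := by
          rw [hA, Nat.card_eq_fintype_card, Nat.card_eq_fintype_card, Nat.card_eq_fintype_card,
            MulAction.card_orbit_mul_card_stabilizer_eq_card_group]
      _ ≤ Nat.card (MulAction.stabilizer (MulAut G) (x : G)) * K := by
          rw [mul_comm]; exact Nat.mul_le_mul_left _ horb
  -- fixed elements have full stabilizer
  have hfixstab : ∀ x : H, (x : G) ∈ autFix H →
      Nat.card (MulAction.stabilizer (MulAut G) (x : G)) = A := by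
    intro x hx
    have : MulAction.stabilizer (MulAut G) (x : G) = ⊤ := by
      ext α
      simp only [MulAction.mem_stabilizer_iff, Subgroup.mem_top, iff_true, MulAut.smul_def]
      exact hx.2 α
    rw [this, hA]
    exact Subgroup.card_top
  -- counting L
  have hLcount : (Finset.univ.filter fun x : H => (x : G) ∈ autFix H).card = L := by
    rw [hL, Nat.card_eq_fintype_card, ← Fintype.card_subtype]
    exact Fintype.card_congr (Equiv.subtypeEquivRight fun x => (Subgroup.mem_subgroupOf).symm)
  -- sum lower bound in ℕ
  have key : L * (A * K) + (h - L) * A ≤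
      (∑ x : H, Nat.card (MulAction.stabilizer (MulAut G) (x : G))) * K := by
    rw [Finset.sum_mul]
    calc L * (A * K) + (h - L) * A
        = ∑ x : H, (if (x : G) ∈ autFix H then A * K else A) := by
          rw [Finset.sum_ite, Finset.sum_const, Finset.sum_const, smul_eq_mul, smul_eq_mul,
            hLcount, Finset.filter_not, Finset.card_sdiff_of_subset (Finset.filter_subset _ _), hLcount,
            Finset.card_univ, ← Nat.card_eq_fintype_card, ← hh]
      _ ≤ ∑ x : H, Nat.card (MulAction.stabilizer (MulAut G) (x : G)) * K := by
          refine Finset.sum_le_sum fun x _ => ?_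
          split_ifs with hx
          · rw [hfixstab x hx]
          · exact hstab x
  have hhpos : 0 < h := Nat.card_pos
  have hApos : 0 < A := Nat.card_pos
  have hKpos : 0 < K := Nat.card_pos
  have hLpos : 0 < L := Nat.card_pos
  have hrpos : 0 < r := by
    rcases Nat.eq_zero_or_pos r with h0 | h0
    · exfalso; rw [h0, zero_mul] at hrL; exact hhpos.ne' hrL.symm
    · exact h0
  have hLle : L ≤ h := hrL ▸ Nat.le_mul_of_pos_left L hrpos
  -- pass to ℚ
  have keyQ : (L : ℚ) * (A * K) + ((h : ℚ) - L) * A ≤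
      (∑ x : H, (Nat.card (MulAction.stabilizer (MulAut G) (x : G)) : ℚ)) * K := by
    have := key
    have hcast : ((h : ℚ) - L) = ((h - L : ℕ) : ℚ) := by
      rw [Nat.cast_sub hLle]
    rw [hcast]
    push_cast [← Nat.cast_sum]
    exact_mod_cast key
  rw [autPr, hcount, ge_iff_le]
  have hrLQ : (r : ℚ) * L = h := by exact_mod_cast hrL
  rw [show (Nat.card H : ℚ) = (h:ℚ) from rfl, show (Nat.card (MulAut G) : ℚ) = (A:ℚ) from rfl]
  have hKQ : (0:ℚ) < K := by exact_mod_cast hKpos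
  have hrQ : (0:ℚ) < r := by exact_mod_cast hrpos
  have hhQ : (0:ℚ) < h := by exact_mod_cast hhpos
  have hAQ : (0:ℚ) < A := by exact_mod_cast hApos
  rw [le_div_iff₀ (by positivity)]
  push_cast
  have expand : 1 / (K:ℚ) * (1 + ((K:ℚ) - 1) / r) * ((h:ℚ) * A)
      = ((h:ℚ) * A * r + ((K:ℚ) - 1) * (h * A)) / ((K:ℚ) * r) := by
    field_simp
  rw [expand, div_le_iff₀ (by positivity)]
  have keyr := mul_le_mul_of_nonneg_right keyQ (le_of_lt hrQ)
  have e1 : ((L:ℚ) * (A * K) + ((h:ℚ) - L) * A) * r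
      = (h:ℚ) * A * K + (h:ℚ) * A * r - (h:ℚ) * A := by
    have : ((L:ℚ) * r) = h := by rw [mul_comm]; exact hrLQ
    linear_combination ((A:ℚ) * K - (A:ℚ)) * this
  rw [e1] at keyr
  linarith [keyr]
end

section
/- Let G₁ and G₂ be finite groups with subgroups H₁ and H₂ respectively, and write Lᵢ = L(Hᵢ, Aut(Gᵢ)). Suppose there exist group isomorphisms ψ : H₁/L₁ → H₂/L₂, γ : Aut(G₁) → Aut(G₂), and β : [H₁, Aut(G₁)] → [H₂, Aut(G₂)] such that for all x₁ ∈ H₁, α₁ ∈ Aut(G₁) and x₂ ∈ H₂ with ψ(x₁L₁) = x₂L₂, one has β(x₁⁻¹α₁(x₁)) = x₂⁻¹(γ(α₁))(x₂). Then Pr(H₁, Aut(G₁)) = Pr(H₂, Aut(G₂)). -/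
open scoped Classical

variable {G : Type*}

section MyAux

variable {G' : Type*} [Group G']

/-- Whether an automorphism fixes an element of `H` only depends on its coset mod `autFix`. -/
lemma myFix_congr (H : Subgroup G') {x y : H}
    (h : (QuotientGroup.mk x : H ⧸ (autFix H).subgroupOf H) = QuotientGroup.mk y)
    (α : MulAut G') : (α (x : G') = x) ↔ (α (y : G') = y) := by
  rw [QuotientGroup.eq, Subgroup.mem_subgroupOf] at h
  have key : α ((x : G')⁻¹ * (y : G')) = (x : G')⁻¹ * y := by
    have := h.2 α
    push_cast at this
    exact this
  rw [map_mul, map_inv] at key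
  have h2 : α (y : G') = α (x : G') * ((x : G')⁻¹ * y) := by
    rw [← key]; group
  constructor
  · intro hx
    rw [h2, hx]; group
  · intro hy
    have h3 : α (x : G') * ((x : G')⁻¹ * y) = y := by rw [← h2, hy]
    have h4 : (x : G') * ((x : G')⁻¹ * y) = y := by group
    exact mul_right_cancel (h3.trans h4.symm)

/-- The fixed-point predicate at quotient level. -/
def myFixQ (H : Subgroup G') (q : (H ⧸ (autFix H).subgroupOf H) × MulAut G') : Prop :=
  ∀ x : H, (QuotientGroup.mk x : H ⧸ (autFix H).subgroupOf H) = q.1 → q.2 (x : G') = x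

/-- Fibering the fixed pairs over the quotient. -/
noncomputable def myFixEquiv (H : Subgroup G') :
    {p : H × MulAut G' // p.2 (p.1 : G') = (p.1 : G')} ≃
      {q : (H ⧸ (autFix H).subgroupOf H) × MulAut G' // myFixQ H q} ×
        ((autFix H).subgroupOf H) where
  toFun p :=
    (⟨(QuotientGroup.mk p.1.1, p.1.2), fun y hy => (myFix_congr H hy p.1.2).mpr p.2⟩,
      ⟨(QuotientGroup.mk p.1.1 : H ⧸ (autFix H).subgroupOf H).out⁻¹ * p.1.1,
        QuotientGroup.eq.mp (QuotientGroup.out_eq' _)⟩)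
  invFun qz :=
    ⟨(qz.1.1.1.out * qz.2.1, qz.1.1.2), by
      have h1 : qz.1.1.2 ((qz.1.1.1.out : H) : G') = qz.1.1.1.out :=
        qz.1.2 qz.1.1.1.out (QuotientGroup.out_eq' _)
      have h2 : qz.1.1.2 ((qz.2.1 : H) : G') = qz.2.1 :=
        (Subgroup.mem_subgroupOf.mp qz.2.2).2 qz.1.1.2
      push_cast
      rw [map_mul, h1, h2]⟩
  left_inv p := by
    apply Subtype.ext
    apply Prod.ext
    · simp [mul_inv_cancel_left]
    · rfl
  right_inv qz := by
    obtain ⟨⟨⟨c, α⟩, hq⟩, l⟩ := qz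
    have hl1 : (QuotientGroup.mk (l : H) : H ⧸ (autFix H).subgroupOf H) = 1 :=
      (QuotientGroup.eq_one_iff _).mpr l.2
    have hmk : (QuotientGroup.mk (c.out * (l : H)) : H ⧸ (autFix H).subgroupOf H) = c := by
      have : (QuotientGroup.mk (c.out * (l : H)) : H ⧸ (autFix H).subgroupOf H)
          = QuotientGroup.mk c.out * QuotientGroup.mk (l : H) := rfl
      rw [this, hl1, mul_one, QuotientGroup.out_eq']
    apply Prod.ext
    · apply Subtype.ext
      apply Prod.ext
      · exact hmk
      · rfl
    · apply Subtype.ext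
      show (QuotientGroup.mk (c.out * (l : H)) : H ⧸ (autFix H).subgroupOf H).out⁻¹
          * (c.out * (l : H)) = (l : H)
      rw [hmk, inv_mul_cancel_left]

lemma myCard_fix (H : Subgroup G') :
    Nat.card {p : H × MulAut G' // p.2 (p.1 : G') = (p.1 : G')} =
      Nat.card {q : (H ⧸ (autFix H).subgroupOf H) × MulAut G' // myFixQ H q} *
        Nat.card ((autFix H).subgroupOf H) := by
  rw [Nat.card_congr (myFixEquiv H), Nat.card_prod]

lemma myAutPr_eq [Fintype G'] (H : Subgroup G') :
    autPr H =
      (Nat.card {q : (H ⧸ (autFix H).subgroupOf H) × MulAut G' // myFixQ H q} : ℚ) /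
        ((Nat.card (H ⧸ (autFix H).subgroupOf H) : ℚ) * (Nat.card (MulAut G') : ℚ)) := by
  have hL : (Nat.card ((autFix H).subgroupOf H) : ℚ) ≠ 0 := by
    have : 0 < Nat.card ((autFix H).subgroupOf H) := Nat.card_pos
    exact_mod_cast this.ne'
  rw [autPr, myCard_fix H, Subgroup.card_eq_card_quotient_mul_card_subgroup
    ((autFix H).subgroupOf H)]
  push_cast
  field_simp

end MyAux

theorem stmt19 {G₁ G₂ : Type*} [Group G₁] [Fintype G₁] [DecidableEq G₁]
    [Group G₂] [Fintype G₂] [DecidableEq G₂]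
    (H₁ : Subgroup G₁) (H₂ : Subgroup G₂)
    (ψ : (H₁ ⧸ (autFix H₁).subgroupOf H₁) ≃* (H₂ ⧸ (autFix H₂).subgroupOf H₂))
    (γ : MulAut G₁ ≃* MulAut G₂)
    (β : Subgroup.closure (autS H₁) ≃* Subgroup.closure (autS H₂))
    (hcompat : ∀ (x₁ : H₁) (α₁ : MulAut G₁) (x₂ : H₂),
      ψ (QuotientGroup.mk x₁) = QuotientGroup.mk x₂ →
      (β ⟨(x₁ : G₁)⁻¹ * α₁ x₁, autcomm_mem_closure H₁ x₁ α₁⟩ : G₂)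
        = (x₂ : G₂)⁻¹ * (γ α₁) x₂) :
    autPr H₁ = autPr H₂ := by
  rw [myAutPr_eq H₁, myAutPr_eq H₂]
  have hiff : ∀ (q : (H₁ ⧸ (autFix H₁).subgroupOf H₁) × MulAut G₁),
      myFixQ H₁ q ↔ myFixQ H₂ (ψ q.1, γ q.2) := by
    rintro ⟨c, α⟩
    constructor
    · intro hfix x₂ hx₂
      have hψ : ψ (QuotientGroup.mk c.out) = QuotientGroup.mk x₂ := by
        rw [QuotientGroup.out_eq']; exact hx₂.symm
      have h := hcompat c.out α x₂ hψ
      have h1 : α ((c.out : H₁) : G₁) = c.out := hfix c.out (QuotientGroup.out_eq' c)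
      have e1 : (⟨((c.out : H₁) : G₁)⁻¹ * α c.out, autcomm_mem_closure H₁ c.out α⟩ :
          Subgroup.closure (autS H₁)) = 1 := by
        apply Subtype.ext
        show ((c.out : H₁) : G₁)⁻¹ * α c.out = 1
        rw [h1, inv_mul_cancel]
      rw [e1, map_one] at h
      have h2 : (x₂ : G₂)⁻¹ * γ α x₂ = 1 := by
        rw [← h]; rfl
      exact (inv_mul_eq_one.mp h2).symm
    · intro hfix x₁ hx₁
      have hψ : ψ (QuotientGroup.mk x₁) = QuotientGroup.mk (ψ c).out := by
        rw [hx₁, QuotientGroup.out_eq']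
      have h := hcompat x₁ α (ψ c).out hψ
      have h2 : γ α (((ψ c).out : H₂) : G₂) = (ψ c).out :=
        hfix (ψ c).out (QuotientGroup.out_eq' _)
      have h3 : (β ⟨(x₁ : G₁)⁻¹ * α x₁, autcomm_mem_closure H₁ x₁ α⟩ : G₂) = 1 := by
        rw [h, h2, inv_mul_cancel]
      have e2 : β ⟨(x₁ : G₁)⁻¹ * α x₁, autcomm_mem_closure H₁ x₁ α⟩ = 1 :=
        Subtype.ext h3
      have e3 : (⟨(x₁ : G₁)⁻¹ * α x₁, autcomm_mem_closure H₁ x₁ α⟩ :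
          Subgroup.closure (autS H₁)) = 1 := by
        apply β.injective
        rw [e2, map_one]
      have e4 : (x₁ : G₁)⁻¹ * α x₁ = 1 := congrArg Subtype.val e3
      exact (inv_mul_eq_one.mp e4).symm
  congr 1
  · exact_mod_cast congrArg (Nat.cast : ℕ → ℚ)
      (Nat.card_congr ((ψ.toEquiv.prodCongr γ.toEquiv).subtypeEquiv hiff))
  · congr 1
    · exact_mod_cast congrArg (Nat.cast : ℕ → ℚ) (Nat.card_congr ψ.toEquiv)
    · exact_mod_cast congrArg (Nat.cast : ℕ → ℚ) (Nat.card_congr γ.toEquiv)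
end
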